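/- arXiv:2412.04176 — 8 statements merged into one kernel-verified Lean document; each statement's English description precedes it below -/
import Mathlib

section
/- If P(z) is a complex polynomial of degree n, then max_{|z|=1} |P'(z)| ≤ n · max_{|z|=1} |P(z)|. -/
open Polynomial

noncomputable def maxSphere (P : Polynomial ℂ) (r : ℝ) : ℝ :=
  sSup ((fun z => ‖P.eval z‖) '' Metric.sphere (0:ℂ) r)

noncomputable def Malpha (P : Polynomial ℂ) (n : ℕ) (α : ℝ) : ℝ :=
  sSup ((fun l : ℕ => ‖P.eval (Complex.exp (Complex.I * ((α + 2 * l * Real.pi) / n)))‖) '' Set.Icc 1 n)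

open Complex

private lemma rev_eval (P : Polynomial ℂ) {w : ℂ} (hw : w ≠ 0) :
    (Polynomial.reverse P).eval w⁻¹ * w ^ P.natDegree = P.eval w := by
  letI := invertibleOfNonzero hw
  have := Polynomial.eval₂_reverse_mul_pow (RingHom.id ℂ) w P
  rw [invOf_eq_inv] at this
  exact this

private lemma gl_aux (z : ℂ) (hz : 1 ≤ ‖z‖) (s : Multiset ℂ)
    (hs : ∀ r ∈ s, ‖r‖ < 1) :
    ((s.map (fun r => X - C r)).prod.eval z ≠ 0 ∧
      0 ≤ (z * (derivative (s.map (fun r => X - C r)).prod).eval z *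
        (starRingEnd ℂ) ((s.map (fun r => X - C r)).prod.eval z)).re) ∧
      (s ≠ 0 → 0 < (z * (derivative (s.map (fun r => X - C r)).prod).eval z *
        (starRingEnd ℂ) ((s.map (fun r => X - C r)).prod.eval z)).re) := by
  induction s using Multiset.induction_on with
  | empty => simp
  | cons r s ih =>
    have hr : ‖r‖ < 1 := hs r (Multiset.mem_cons_self r s)
    obtain ⟨⟨hne, hnneg⟩, _⟩ := ih (fun x hx => hs x (Multiset.mem_cons_of_mem hx))
    set F : Polynomial ℂ := (s.map (fun r => X - C r)).prod with hF
    have hprod : ((r ::ₘ s).map (fun r => X - C r)).prod = (X - C r) * F := by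
      rw [Multiset.map_cons, Multiset.prod_cons]
    have hderiv : derivative ((X - C r) * F) = F + (X - C r) * derivative F := by
      rw [derivative_mul, derivative_sub, derivative_X, derivative_C, sub_zero, one_mul]
    have ha : z - r ≠ 0 := by
      intro h
      rw [sub_eq_zero.mp h] at hz
      exact absurd hz (not_le.mpr hr)
    set u : ℂ := F.eval z with hu
    set u' : ℂ := (derivative F).eval z with hu'
    have heval : ((r ::ₘ s).map (fun r => X - C r)).prod.eval z = (z - r) * u := by
      rw [hprod]; simp [hu]
    have hdeval : (derivative ((r ::ₘ s).map (fun r => X - C r)).prod).eval z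
        = u + (z - r) * u' := by
      rw [hprod, hderiv]; simp [hu, hu']
    have hE : z * (u + (z - r) * u') * (starRingEnd ℂ) ((z - r) * u)
        = (normSq (z - r) : ℂ) * (z * u' * (starRingEnd ℂ) u)
          + (normSq u : ℂ) * (z * (starRingEnd ℂ) (z - r)) := by
      rw [map_mul, ← Complex.mul_conj, ← Complex.mul_conj]
      ring
    have hre2 : 0 < (z * (starRingEnd ℂ) (z - r)).re := by
      have h1 : z * (starRingEnd ℂ) (z - r) = (normSq z : ℂ) - z * (starRingEnd ℂ) r := by
        rw [map_sub, mul_sub, Complex.mul_conj]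
      have h2 : (z * (starRingEnd ℂ) r).re ≤ ‖z‖ * ‖r‖ := by
        calc (z * (starRingEnd ℂ) r).re ≤ ‖z * (starRingEnd ℂ) r‖ :=
              Complex.re_le_norm _
          _ = ‖z‖ * ‖r‖ := by rw [norm_mul, Complex.norm_conj]
      have h3 : (z * (starRingEnd ℂ) (z - r)).re = normSq z - (z * (starRingEnd ℂ) r).re := by
        rw [h1]; simp
      rw [h3, Complex.normSq_eq_norm_sq]
      nlinarith [norm_nonneg r]
    have hposre : 0 < (z * (u + (z - r) * u') * (starRingEnd ℂ) ((z - r) * u)).re := by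
      rw [hE]
      have : ((normSq (z - r) : ℂ) * (z * u' * (starRingEnd ℂ) u)
          + (normSq u : ℂ) * (z * (starRingEnd ℂ) (z - r))).re
          = normSq (z - r) * (z * u' * (starRingEnd ℂ) u).re
            + normSq u * (z * (starRingEnd ℂ) (z - r)).re := by
        simp [Complex.add_re, Complex.re_ofReal_mul]
      rw [this]
      have hq1 : 0 ≤ normSq (z - r) * (z * u' * (starRingEnd ℂ) u).re :=
        mul_nonneg (normSq_nonneg _) hnneg
      have hq2 : 0 < normSq u * (z * (starRingEnd ℂ) (z - r)).re :=
        mul_pos (by simpa [Complex.normSq_pos] using hne) hre2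
      linarith
    refine ⟨⟨by rw [heval]; exact mul_ne_zero ha hne, ?_⟩, fun _ => ?_⟩ <;>
      rw [heval, hdeval]
    · exact le_of_lt hposre
    · exact hposre

private lemma deriv_ne_zero (R : Polynomial ℂ) (hR : 1 ≤ R.natDegree)
    (hroots : ∀ w : ℂ, R.eval w = 0 → ‖w‖ < 1)
    (z : ℂ) (hz : 1 ≤ ‖z‖) : (derivative R).eval z ≠ 0 := by
  have hR0 : R ≠ 0 := fun h => by simp [h] at hR
  have hsp : R.Splits := IsAlgClosed.splits R
  have heq := hsp.eq_prod_roots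
  have hcard : R.roots.card = R.natDegree := (Polynomial.splits_iff_card_roots).mp hsp
  have hs0 : R.roots ≠ 0 := by
    intro h; rw [h] at hcard; simp at hcard; omega
  have hmem : ∀ r ∈ R.roots, ‖r‖ < 1 := fun r hr =>
    hroots r (Polynomial.isRoot_of_mem_roots hr)
  obtain ⟨⟨hne, -⟩, hpos⟩ := gl_aux z hz R.roots hmem
  have hpos := hpos hs0
  have hF' : (derivative ((R.roots.map (fun r => X - C r)).prod)).eval z ≠ 0 := by
    intro h
    rw [h] at hpos
    simp at hpos
  have hld : R.leadingCoeff ≠ 0 := Polynomial.leadingCoeff_ne_zero.mpr hR0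
  rw [heq, derivative_C_mul, eval_mul, eval_C]
  exact mul_ne_zero hld hF'

theorem stmt_0 (n : ℕ) (hn : 1 ≤ n) (P : Polynomial ℂ) (hdeg : P.natDegree = n) :
    maxSphere (derivative P) 1 ≤ n * maxSphere P 1 := by
  set M : ℝ := maxSphere P 1 with hM
  have hP0 : P ≠ 0 := by
    intro h; rw [h] at hdeg; simp at hdeg; omega
  -- upper bound on the sphere
  have hbdd : BddAbove ((fun z => ‖P.eval z‖) '' Metric.sphere (0:ℂ) 1) :=
    ((isCompact_sphere (0:ℂ) 1).image
      (continuous_norm.comp P.continuous_aeval)).bddAbove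
  have hub : ∀ z : ℂ, ‖z‖ = 1 → ‖P.eval z‖ ≤ M := by
    intro z hz1
    refine le_csSup hbdd ⟨z, ?_, rfl⟩
    rw [mem_sphere_zero_iff_norm, hz1]
  -- max modulus for the reverse polynomial
  set Q : Polynomial ℂ := Polynomial.reverse P with hQ
  have hQbound : ∀ w : ℂ, ‖w‖ ≤ 1 → ‖Q.eval w‖ ≤ M := by
    intro w hw
    have := Complex.norm_le_of_forall_mem_frontier_norm_le (f := fun w => Q.eval w)
      (U := Metric.ball (0:ℂ) 1) Metric.isBounded_ball
      (C := M) (Q.differentiable.diffContOnCl) ?_ (z := w) ?_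
    · simpa using this
    · intro v hv
      rw [frontier_ball (0:ℂ) one_ne_zero, mem_sphere_zero_iff_norm] at hv
      have hv1 : ‖v‖ = 1 := by simpa using hv
      have hv0 : v ≠ 0 := by intro h; rw [h] at hv1; simp at hv1
      have hvinv : v⁻¹ ≠ 0 := inv_ne_zero hv0
      have hid := rev_eval P hvinv
      rw [inv_inv] at hid
      have habs : ‖Q.eval v‖ * ‖v⁻¹‖ ^ P.natDegree
          = ‖P.eval v⁻¹‖ := by
        rw [← hid, norm_mul, norm_pow]
      have hvinv1 : ‖v⁻¹‖ = 1 := by rw [norm_inv, hv1, inv_one]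
      rw [hvinv1, one_pow, mul_one] at habs
      show ‖Q.eval v‖ ≤ M
      rw [habs]
      exact hub _ hvinv1
    · rw [closure_ball (0:ℂ) one_ne_zero, Metric.mem_closedBall, Complex.dist_eq, sub_zero]
      exact hw
  -- the leading coefficient is bounded by M, hence M > 0
  have hlead : ‖P.coeff n‖ ≤ M := by
    have h0 : Q.eval 0 = P.leadingCoeff := by
      rw [← Polynomial.coeff_zero_eq_eval_zero, hQ, Polynomial.coeff_zero_reverse]
    have := hQbound 0 (by simp)
    rw [h0] at this
    rwa [Polynomial.leadingCoeff, hdeg] at this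
  have hM0 : 0 < M := by
    have h1 : P.coeff n ≠ 0 := by
      rw [← hdeg]; exact Polynomial.leadingCoeff_ne_zero.mpr hP0
    exact lt_of_lt_of_le (by simpa using (norm_pos_iff.mpr h1)) hlead
  -- growth estimate
  have hgrow : ∀ w : ℂ, 1 ≤ ‖w‖ →
      ‖P.eval w‖ ≤ M * ‖w‖ ^ n := by
    intro w hw
    have hw0 : w ≠ 0 := by
      intro h; rw [h] at hw; simp at hw; linarith
    have hid := rev_eval P hw0
    have : ‖P.eval w‖ = ‖Q.eval w⁻¹‖ * ‖w‖ ^ n := by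
      rw [← hid, norm_mul, norm_pow, hdeg, hQ]
    rw [this]
    have hwin : ‖w⁻¹‖ ≤ 1 := by
      rw [norm_inv]
      exact inv_le_one_of_one_le₀ hw
    exact mul_le_mul_of_nonneg_right (hQbound _ hwin) (by positivity)
  -- pointwise Bernstein
  have hpt : ∀ z : ℂ, ‖z‖ = 1 →
      ‖(derivative P).eval z‖ ≤ n * M := by
    intro z hz1
    by_contra hcon
    push_neg at hcon
    have hz0 : z ≠ 0 := by intro h; rw [h] at hz1; simp at hz1
    have hzn : (n : ℂ) * z ^ (n - 1) ≠ 0 :=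
      mul_ne_zero (Nat.cast_ne_zero.mpr (by omega)) (pow_ne_zero _ hz0)
    set c : ℂ := (derivative P).eval z / ((n : ℂ) * z ^ (n - 1)) with hc
    have hcmul : c * ((n : ℂ) * z ^ (n - 1)) = (derivative P).eval z :=
      div_mul_cancel₀ _ hzn
    have habsc : M < ‖c‖ := by
      have : ‖(n : ℂ) * z ^ (n - 1)‖ = n := by
        rw [norm_mul, norm_pow, hz1, one_pow, mul_one, Complex.norm_natCast]
      rw [hc, norm_div, this, lt_div_iff₀ (by positivity)]
      linarith [hcon]
    set R : Polynomial ℂ := P - C c * X ^ n with hR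
    have hRroots : ∀ w : ℂ, R.eval w = 0 → ‖w‖ < 1 := by
      intro w hw
      by_contra hwc
      push_neg at hwc
      have h1 : P.eval w = c * w ^ n := by
        have := hw
        rw [hR] at this
        simpa [sub_eq_zero] using this
      have h2 : ‖P.eval w‖ = ‖c‖ * ‖w‖ ^ n := by
        rw [h1, norm_mul, norm_pow]
      have h3 := hgrow w hwc
      rw [h2] at h3
      have h4 : (0:ℝ) < ‖w‖ ^ n := by positivity
      nlinarith
    have hRdeg : 1 ≤ R.natDegree := by
      have hco : R.coeff n = P.coeff n - c := by
        rw [hR]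
        simp [Polynomial.coeff_sub, Polynomial.coeff_C_mul, Polynomial.coeff_X_pow]
      have hco0 : R.coeff n ≠ 0 := by
        rw [hco]
        intro h
        rw [sub_eq_zero] at h
        rw [← h] at habsc
        linarith
      have := Polynomial.le_natDegree_of_ne_zero hco0
      omega
    have hder0 : (derivative R).eval z = 0 := by
      rw [hR, derivative_sub, Polynomial.derivative_C_mul_X_pow]
      rw [eval_sub, eval_mul, eval_C, eval_pow, eval_X]
      rw [← hcmul]
      ring
    exact deriv_ne_zero R hRdeg hRroots z (le_of_eq hz1.symm) hder0
  -- conclude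
  rw [hM, maxSphere]
  apply Real.sSup_le
  · rintro x ⟨z, hz, rfl⟩
    rw [mem_sphere_zero_iff_norm] at hz
    exact hpt z (by simpa using hz)
  · positivity
end

section
/- If P(z) is a complex polynomial of degree n, then max_{|z|=1} |P'(z)| ≤ n · max_{1 ≤ l ≤ 2n} |P(e^{i l π / n})|, i.e., the derivative on the unit circle is bounded by n times the maximum of |P| over the (2n)-th roots of unity. -/
open Polynomial

noncomputable def ee (n : ℕ) (m : ℤ) : ℂ := Complex.exp (Complex.I * (m * Real.pi / n))

lemma ee_add (n : ℕ) (a b : ℤ) : ee n (a + b) = ee n a * ee n b := by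
  rw [ee, ee, ee, ← Complex.exp_add]; congr 1; push_cast; ring

lemma ee_pow (n : ℕ) (a : ℤ) (k : ℕ) : ee n a ^ k = ee n (k * a) := by
  rw [ee, ee, ← Complex.exp_nat_mul]; congr 1; push_cast; ring

lemma ee_conj (n : ℕ) (a : ℤ) : (starRingEnd ℂ) (ee n a) = ee n (-a) := by
  rw [ee, ee, ← Complex.exp_conj]; congr 1
  simp [map_mul, map_div₀, Complex.conj_I]
  try ring

lemma ee_abs (n : ℕ) (a : ℤ) : ‖ee n a‖ = 1 := by
  rw [ee, Complex.norm_exp]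
  have : (Complex.I * (a * Real.pi / n)).re = 0 := by
    simp [Complex.mul_re]
  rw [this, Real.exp_zero]

lemma ee_two_n (n : ℕ) (hn : 1 ≤ n) (m : ℤ) : ee n (2 * n * m) = 1 := by
  have hn0 : (n : ℂ) ≠ 0 := Nat.cast_ne_zero.mpr (by omega)
  rw [ee]
  have : Complex.I * ((2 * (n:ℤ) * m : ℤ) * Real.pi / n) = (m : ℤ) * (2 * Real.pi * Complex.I) := by
    field_simp; push_cast; ring
  rw [this, Complex.exp_int_mul_two_pi_mul_I]

lemma ee_ne_one (n : ℕ) (hn : 1 ≤ n) (m : ℤ) (hm : m ≠ 0) (hm2 : |m| < 2 * n) : ee n m ≠ 1 := by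
  intro h
  rw [ee, Complex.exp_eq_one_iff] at h
  obtain ⟨k, hk⟩ := h
  have h2 : (m : ℂ) * Real.pi / n = (k : ℂ) * (2 * Real.pi) := by
    apply mul_left_cancel₀ Complex.I_ne_zero
    rw [hk]; ring
  have h3 : (m : ℝ) * Real.pi / n = (k : ℝ) * (2 * Real.pi) := by exact_mod_cast h2
  have hn0 : (n : ℝ) ≠ 0 := Nat.cast_ne_zero.mpr (by omega)
  have h4 : (m : ℝ) * Real.pi = (k : ℝ) * (2 * Real.pi) * n := by
    field_simp at h3; rw [h3]; ring
  have h5 : (m : ℝ) = 2 * k * n := by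
    have hpi := Real.pi_ne_zero
    have : (m : ℝ) * Real.pi = (2 * k * n) * Real.pi := by rw [h4]; ring
    exact mul_right_cancel₀ hpi this
  have h6 : m = 2 * k * n := by exact_mod_cast h5
  rcases eq_or_ne k 0 with rfl | hk0
  · simp at h6; omega
  · have : (1:ℤ) ≤ |k| := Int.one_le_abs hk0
    have : (2 * n : ℤ) ≤ |m| := by
      rw [h6, abs_mul, abs_mul]
      have : |(2:ℤ)| = 2 := by norm_num
      rw [this]
      have hnn : |(n:ℤ)| = n := abs_of_nonneg (by positivity)
      rw [hnn]
      nlinarith [abs_nonneg k, (by positivity : (0:ℤ) ≤ (n:ℤ))]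
    omega

lemma sum_ee (n : ℕ) (hn : 1 ≤ n) (m : ℤ) (hm : |m| < 2 * n) :
    ∑ l ∈ Finset.Icc 1 (2 * n), ee n (l * m) = if m = 0 then ((2 * n : ℕ) : ℂ) else 0 := by
  rcases eq_or_ne m 0 with rfl | hm0
  · simp [ee]
  · rw [if_neg hm0]
    have h1 : ∀ l ∈ Finset.Icc 1 (2 * n), ee n (l * m) = ee n m ^ l := by
      intro l _; rw [ee_pow]
    rw [Finset.sum_congr rfl h1]
    have hne := ee_ne_one n hn m hm0 hm
    have hpow : ee n m ^ (2 * n) = 1 := by rw [ee_pow]; push_cast; exact ee_two_n n hn m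
    have : ∑ l ∈ Finset.Icc 1 (2 * n), ee n m ^ l
        = ∑ i ∈ Finset.range (2 * n), ee n m ^ (1 + i) := by
      rw [← Finset.Ico_add_one_right_eq_Icc, Finset.sum_Ico_eq_sum_range]
      norm_num
    rw [this]
    have : ∑ i ∈ Finset.range (2 * n), ee n m ^ (1 + i)
        = ee n m * ∑ i ∈ Finset.range (2 * n), ee n m ^ i := by
      rw [Finset.mul_sum]; congr 1; ext i; rw [pow_add, pow_one]
    rw [this, geom_sum_eq hne, hpow]
    simp

lemma deriv_eval (P : Polynomial ℂ) (z : ℂ) :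
    (derivative P).eval z = ∑ j ∈ Finset.range (P.natDegree + 1), P.coeff j * j * z ^ (j - 1) := by
  conv_lhs => rw [P.as_sum_range' (P.natDegree + 1) (Nat.lt_succ_self _)]
  rw [derivative_sum, eval_finset_sum]
  apply Finset.sum_congr rfl
  intro j _
  rw [derivative_monomial, eval_monomial]

lemma key_identity (n : ℕ) (hn : 1 ≤ n) (P : Polynomial ℂ) (hdeg : P.natDegree = n) (z : ℂ) :
    ∑ l ∈ Finset.Icc 1 (2 * n), P.eval (ee n l) *
        (∑ p ∈ Finset.range n, ∑ q ∈ Finset.range n, z ^ (p + q) * ee n (-(l : ℤ) * (p + q + 1)))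
      = (2 * n : ℕ) * (derivative P).eval z := by
  have expand : ∀ l : ℕ, P.eval (ee n l) *
      (∑ p ∈ Finset.range n, ∑ q ∈ Finset.range n, z ^ (p + q) * ee n (-(l : ℤ) * (p + q + 1)))
      = ∑ j ∈ Finset.range (n + 1), ∑ p ∈ Finset.range n, ∑ q ∈ Finset.range n,
          P.coeff j * z ^ (p + q) * ee n ((l : ℤ) * ((j : ℤ) - (p + q + 1))) := by
    intro l
    rw [eval_eq_sum_range' (show P.natDegree < n + 1 by omega), Finset.sum_mul_sum]
    apply Finset.sum_congr rfl; intro j _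
    apply Finset.sum_congr rfl; intro p _
    rw [Finset.mul_sum]
    apply Finset.sum_congr rfl; intro q _
    rw [ee_pow n l j,
      show (l : ℤ) * ((j : ℤ) - (p + q + 1)) = (j : ℕ) * (l : ℤ) + (-(l : ℤ) * (p + q + 1)) by
        push_cast; ring,
      ee_add]
    ring
  rw [Finset.sum_congr rfl fun l _ => expand l]
  rw [Finset.sum_comm]
  rw [deriv_eval, hdeg, Finset.mul_sum]
  apply Finset.sum_congr rfl; intro j hj
  rw [Finset.sum_comm]
  have inner : ∀ p ∈ Finset.range n,
      ∑ l ∈ Finset.Icc 1 (2 * n), ∑ q ∈ Finset.range n,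
        P.coeff j * z ^ (p + q) * ee n ((l : ℤ) * ((j : ℤ) - (p + q + 1)))
      = if p + 1 ≤ j then P.coeff j * z ^ (j - 1) * (2 * n : ℕ) else 0 := by
    intro p hp
    rw [Finset.sum_comm]
    have hq : ∀ q ∈ Finset.range n,
        ∑ l ∈ Finset.Icc 1 (2 * n), P.coeff j * z ^ (p + q) * ee n ((l : ℤ) * ((j : ℤ) - (p + q + 1)))
        = P.coeff j * z ^ (p + q) *
            (if ((j : ℤ) - (p + q + 1) = 0) then ((2 * n : ℕ) : ℂ) else 0) := by
      intro q hq
      rw [← Finset.mul_sum, sum_ee n hn _ (by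
        simp only [Finset.mem_range] at hj hp hq
        rw [abs_lt]
        push_cast
        omega)]
    rw [Finset.sum_congr rfl hq]
    simp only [Finset.mem_range] at hj hp
    by_cases h : p + 1 ≤ j
    · rw [if_pos h]
      rw [Finset.sum_eq_single_of_mem (j - 1 - p) (Finset.mem_range.mpr (by omega))]
      · have h1 : p + (j - 1 - p) = j - 1 := by omega
        have h2 : ((j : ℤ) - (p + (j - 1 - p) + 1) = 0) := by push_cast; omega
        rw [h1, if_pos (by push_cast; omega)]
      · intro q hq' hne
        rw [if_neg (by
          simp only [Finset.mem_range] at hq'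
          push_cast
          omega), mul_zero]
    · rw [if_neg h]
      apply Finset.sum_eq_zero
      intro q hq'
      rw [if_neg (by
        simp only [Finset.mem_range] at hq'
        push_cast
        omega), mul_zero]
  rw [Finset.sum_congr rfl inner]
  simp only [Finset.mem_range] at hj
  have hsub : ∑ p ∈ Finset.range n, (if p + 1 ≤ j then P.coeff j * z ^ (j - 1) * ((2 * n : ℕ) : ℂ) else 0)
      = ∑ p ∈ Finset.range j, (if p + 1 ≤ j then P.coeff j * z ^ (j - 1) * ((2 * n : ℕ) : ℂ) else 0) := by
    apply (Finset.sum_subset (Finset.range_subset_range.mpr (by omega)) ?_).symm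
    intro x _ hx
    rw [if_neg (by simp only [Finset.mem_range] at hx; omega)]
  rw [hsub, Finset.sum_congr rfl (fun p hp => if_pos (by simp only [Finset.mem_range] at hp; omega)),
    Finset.sum_const, Finset.card_range, nsmul_eq_mul]
  push_cast
  ring

lemma W_factor (n : ℕ) (z : ℂ) (l : ℕ) :
    ∑ p ∈ Finset.range n, ∑ q ∈ Finset.range n, z ^ (p + q) * ee n (-(l : ℤ) * (p + q + 1))
      = ee n (-(l : ℤ)) * (∑ p ∈ Finset.range n, z ^ p * ee n (-(l : ℤ) * p)) ^ 2 := by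
  rw [sq, Finset.sum_mul_sum, Finset.mul_sum]
  apply Finset.sum_congr rfl; intro p _
  rw [Finset.mul_sum]
  apply Finset.sum_congr rfl; intro q _
  rw [pow_add,
    show -(l : ℤ) * ((p : ℤ) + q + 1) = -(l : ℤ) * p + (-(l : ℤ) * q + -(l : ℤ)) by ring,
    ee_add, ee_add]
  ring

lemma kernel_sum (n : ℕ) (hn : 1 ≤ n) (z : ℂ) (hz : ‖z‖ = 1) :
    ∑ l ∈ Finset.Icc 1 (2 * n),
      ‖∑ p ∈ Finset.range n, ∑ q ∈ Finset.range n,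
        z ^ (p + q) * ee n (-(l : ℤ) * (p + q + 1))‖
      = (n : ℝ) * (2 * n) := by
  have habs : ∀ l ∈ Finset.Icc 1 (2 * n),
      ‖∑ p ∈ Finset.range n, ∑ q ∈ Finset.range n,
        z ^ (p + q) * ee n (-(l : ℤ) * (p + q + 1))‖
      = Complex.normSq (∑ p ∈ Finset.range n, z ^ p * ee n (-(l : ℤ) * p)) := by
    intro l _
    rw [W_factor, norm_mul, norm_pow, ee_abs, one_mul, Complex.sq_norm]
  rw [Finset.sum_congr rfl habs]
  -- complex identity
  have hc : ∑ l ∈ Finset.Icc 1 (2 * n),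
      (∑ p ∈ Finset.range n, z ^ p * ee n (-(l : ℤ) * p)) *
        (starRingEnd ℂ) (∑ p ∈ Finset.range n, z ^ p * ee n (-(l : ℤ) * p))
      = ((n : ℂ) * (2 * n)) := by
    have hconj : ∀ l : ℕ, (starRingEnd ℂ) (∑ p ∈ Finset.range n, z ^ p * ee n (-(l : ℤ) * p))
        = ∑ q ∈ Finset.range n, ((starRingEnd ℂ) z) ^ q * ee n ((l : ℤ) * q) := by
      intro l
      rw [map_sum]
      apply Finset.sum_congr rfl; intro q _
      rw [map_mul, map_pow, ee_conj]
      congr 2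
      ring
    have hexp : ∀ l ∈ Finset.Icc 1 (2 * n),
        (∑ p ∈ Finset.range n, z ^ p * ee n (-(l : ℤ) * p)) *
          (starRingEnd ℂ) (∑ p ∈ Finset.range n, z ^ p * ee n (-(l : ℤ) * p))
        = ∑ p ∈ Finset.range n, ∑ q ∈ Finset.range n,
            z ^ p * ((starRingEnd ℂ) z) ^ q * ee n ((l : ℤ) * ((q : ℤ) - p)) := by
      intro l _
      rw [hconj, Finset.sum_mul_sum]
      apply Finset.sum_congr rfl; intro p _
      apply Finset.sum_congr rfl; intro q _
      rw [show (l : ℤ) * ((q : ℤ) - p) = -(l : ℤ) * p + (l : ℤ) * q by ring, ee_add]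
      ring
    rw [Finset.sum_congr rfl hexp, Finset.sum_comm]
    have hinner : ∀ p ∈ Finset.range n,
        ∑ l ∈ Finset.Icc 1 (2 * n), ∑ q ∈ Finset.range n,
          z ^ p * ((starRingEnd ℂ) z) ^ q * ee n ((l : ℤ) * ((q : ℤ) - p))
        = z ^ p * ((starRingEnd ℂ) z) ^ p * (2 * n : ℕ) := by
      intro p hp
      rw [Finset.sum_comm]
      have hq : ∀ q ∈ Finset.range n,
          ∑ l ∈ Finset.Icc 1 (2 * n), z ^ p * ((starRingEnd ℂ) z) ^ q * ee n ((l : ℤ) * ((q : ℤ) - p))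
          = z ^ p * ((starRingEnd ℂ) z) ^ q *
              (if ((q : ℤ) - p = 0) then ((2 * n : ℕ) : ℂ) else 0) := by
        intro q hq
        rw [← Finset.mul_sum, sum_ee n hn _ (by
          simp only [Finset.mem_range] at hp hq
          rw [abs_lt]
          omega)]
      rw [Finset.sum_congr rfl hq]
      simp only [Finset.mem_range] at hp
      rw [Finset.sum_eq_single_of_mem p (Finset.mem_range.mpr hp)]
      · rw [if_pos (by omega)]
      · intro q hq' hne
        rw [if_neg (by
          simp only [Finset.mem_range] at hq'
          omega), mul_zero]
    rw [Finset.sum_congr rfl hinner]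
    have hz1 : z * (starRingEnd ℂ) z = 1 := by
      rw [Complex.mul_conj]
      norm_cast
      rw [← Complex.sq_norm, hz, one_pow]
    have : ∀ p ∈ Finset.range n, z ^ p * ((starRingEnd ℂ) z) ^ p * ((2 * n : ℕ) : ℂ)
        = ((2 * n : ℕ) : ℂ) := by
      intro p _
      rw [← mul_pow, hz1, one_pow, one_mul]
    rw [Finset.sum_congr rfl this, Finset.sum_const, Finset.card_range, nsmul_eq_mul]
    push_cast
    ring
  -- pass to reals
  have := hc
  simp only [Complex.mul_conj] at this
  have h2 : ((∑ l ∈ Finset.Icc 1 (2 * n),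
      Complex.normSq (∑ p ∈ Finset.range n, z ^ p * ee n (-(l : ℤ) * p)) : ℝ) : ℂ)
      = (((n : ℝ) * (2 * n) : ℝ) : ℂ) := by
    push_cast at this ⊢
    convert this using 2
  exact_mod_cast h2

lemma key_bound (n : ℕ) (hn : 1 ≤ n) (P : Polynomial ℂ) (hdeg : P.natDegree = n)
    (M : ℝ) (hM : ∀ l ∈ Finset.Icc 1 (2 * n), ‖P.eval (ee n l)‖ ≤ M)
    (z : ℂ) (hz : ‖z‖ = 1) :
    ‖(derivative P).eval z‖ ≤ n * M := by
  set W : ℕ → ℂ := fun l =>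
    ∑ p ∈ Finset.range n, ∑ q ∈ Finset.range n, z ^ (p + q) * ee n (-(l : ℤ) * (p + q + 1)) with hW
  have h1 : (2 * n : ℝ) * ‖(derivative P).eval z‖
      = ‖∑ l ∈ Finset.Icc 1 (2 * n), P.eval (ee n l) * W l‖ := by
    rw [key_identity n hn P hdeg z, norm_mul, Complex.norm_natCast]
    push_cast
    ring
  have h2 : ‖∑ l ∈ Finset.Icc 1 (2 * n), P.eval (ee n l) * W l‖
      ≤ M * ((n : ℝ) * (2 * n)) := by
    calc ‖∑ l ∈ Finset.Icc 1 (2 * n), P.eval (ee n l) * W l‖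
        ≤ ∑ l ∈ Finset.Icc 1 (2 * n), ‖P.eval (ee n l) * W l‖ := by
          exact norm_sum_le _ _
      _ ≤ ∑ l ∈ Finset.Icc 1 (2 * n), M * ‖W l‖ := by
          apply Finset.sum_le_sum
          intro l hl
          rw [norm_mul]
          exact mul_le_mul_of_nonneg_right (hM l hl) (by positivity)
      _ = M * ((n : ℝ) * (2 * n)) := by
          rw [← Finset.mul_sum, kernel_sum n hn z hz]
  have hn0 : (0 : ℝ) < 2 * n := by positivity
  nlinarith [h1, h2, norm_nonneg ((derivative P).eval z)]

theorem stmt_1 (n : ℕ) (hn : 1 ≤ n) (P : Polynomial ℂ) (hdeg : P.natDegree = n) :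
    maxSphere (derivative P) 1 ≤
      n * sSup ((fun l : ℕ => ‖P.eval (Complex.exp (Complex.I * (l * Real.pi / n)))‖) ''
        Set.Icc 1 (2 * n)) := by
  set f : ℕ → ℝ := fun l => ‖P.eval (Complex.exp (Complex.I * (l * Real.pi / n)))‖ with hf
  set M : ℝ := sSup (f '' Set.Icc 1 (2 * n)) with hMdef
  have hnode : ∀ l : ℕ, Complex.exp (Complex.I * ((l : ℂ) * Real.pi / n)) = ee n l := by
    intro l; rw [ee]; norm_num
  have hbdd : BddAbove (f '' Set.Icc 1 (2 * n)) := ((Set.finite_Icc 1 (2 * n)).image f).bddAbove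
  have hM : ∀ l ∈ Finset.Icc 1 (2 * n), ‖P.eval (ee n l)‖ ≤ M := by
    intro l hl
    rw [← hnode l]
    apply le_csSup hbdd
    exact ⟨l, by simpa using hl, rfl⟩
  have hM0 : 0 ≤ M := by
    refine le_trans (norm_nonneg (P.eval (ee n 1))) ?_
    exact hM 1 (Finset.mem_Icc.mpr ⟨le_refl 1, by omega⟩)
  rw [maxSphere]
  apply Real.sSup_le
  · rintro x ⟨z, hzs, rfl⟩
    have hz : ‖z‖ = 1 := by
      simpa using (Metric.mem_sphere.mp hzs)
    exact key_bound n hn P hdeg M hM z hz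
  · positivity
end

section
/- If P(z) is a complex polynomial of degree n, then for every real α, max_{|z|=1} |P'(z)| ≤ (n/2)(M_α + M_{α+π}), where M_α = max_{1 ≤ l ≤ n} |P(e^{i(α+2lπ)/n})|. -/
open Polynomial

open Complex Finset in

private lemma geom_zero {q : ℂ} {N : ℕ} (hq : q ≠ 1) (hN : q ^ N = 1) :
    ∑ k ∈ Finset.range N, q ^ k = 0 := by
  rw [geom_sum_eq hq, hN]; simp

open Complex Finset in
private lemma root_sum (N : ℕ) (hN : 1 ≤ N) (c : ℂ) (hc : c ≠ 0) (p q : ℕ) (hp : p < N) (hq : q < N) :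
    ∑ k ∈ Finset.range N, (c * Complex.exp (2 * Real.pi * Complex.I / N) ^ k) ^ p *
      ((c * Complex.exp (2 * Real.pi * Complex.I / N) ^ k)⁻¹) ^ q
    = if p = q then (N : ℂ) else 0 := by
  set ζ : ℂ := Complex.exp (2 * Real.pi * Complex.I / N) with hζ
  have hN0 : (N : ℂ) ≠ 0 := Nat.cast_ne_zero.2 (by omega)
  have hζ0 : ζ ≠ 0 := Complex.exp_ne_zero _
  have hζN : ζ ^ N = 1 := by
    rw [hζ, ← Complex.exp_nat_mul]
    rw [show (N : ℂ) * (2 * Real.pi * Complex.I / N) = 2 * Real.pi * Complex.I by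
      field_simp]
    exact Complex.exp_two_pi_mul_I
  have hterm : ∀ k, (c * ζ ^ k) ^ p * ((c * ζ ^ k)⁻¹) ^ q
      = (c ^ p * (c⁻¹) ^ q) * (ζ ^ p * (ζ⁻¹) ^ q) ^ k := by
    intro k
    have h1 : (c * ζ ^ k)⁻¹ = c⁻¹ * (ζ⁻¹) ^ k := by rw [mul_inv, inv_pow]
    rw [h1]; ring
  simp only [hterm]
  rw [← Finset.mul_sum]
  by_cases hpq : p = q
  · subst hpq
    simp [inv_pow, mul_inv_cancel₀ (pow_ne_zero p hc), mul_inv_cancel₀ (pow_ne_zero p hζ0)]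
  · rw [if_neg hpq]
    have hr1 : (ζ ^ p * (ζ⁻¹) ^ q) ^ N = 1 := by
      rw [mul_pow, ← pow_mul, ← pow_mul, mul_comm p N, mul_comm q N, pow_mul, pow_mul,
        hζN, inv_pow, hζN]
      simp
    have hrne : ζ ^ p * (ζ⁻¹) ^ q ≠ 1 := by
      intro h
      rw [inv_pow] at h
      have hpqz : ζ ^ p = ζ ^ q :=
        mul_right_cancel₀ (inv_ne_zero (pow_ne_zero q hζ0))
          (h.trans (mul_inv_cancel₀ (pow_ne_zero q hζ0)).symm)
      rw [hζ, ← Complex.exp_nat_mul, ← Complex.exp_nat_mul,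
        Complex.exp_eq_exp_iff_exists_int] at hpqz
      obtain ⟨t, ht⟩ := hpqz
      have hne : (2 * (Real.pi:ℂ) * Complex.I) ≠ 0 := by
        simp [Real.pi_ne_zero, Complex.I_ne_zero]
      have h2 : (p : ℂ) = q + t * N := by
        field_simp at ht
        apply mul_right_cancel₀ hne
        linear_combination (2 * (Real.pi:ℂ) * Complex.I) * ht
      have h3 : (p : ℤ) = q + t * N := by exact_mod_cast h2
      have hNZ : (1:ℤ) ≤ (N:ℤ) := by exact_mod_cast hN
      have hpZ : (p:ℤ) < (N:ℤ) := by exact_mod_cast hp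
      have hqZ : (q:ℤ) < (N:ℤ) := by exact_mod_cast hq
      have hp0 : (0:ℤ) ≤ (p:ℤ) := Int.natCast_nonneg p
      have hq0 : (0:ℤ) ≤ (q:ℤ) := Int.natCast_nonneg q
      rcases lt_trichotomy t 0 with h'|h'|h'
      · have h4 : t * (N:ℤ) ≤ -1 * N := mul_le_mul_of_nonneg_right (by omega) (by omega)
        linarith
      · rw [h', zero_mul, add_zero] at h3
        exact hpq (by exact_mod_cast h3)
      · have h4 : 1 * (N:ℤ) ≤ t * N := mul_le_mul_of_nonneg_right (by omega) (by omega)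
        linarith
    rw [geom_zero hrne hr1, mul_zero]

open Complex Finset in
private lemma fejer_sum (n : ℕ) (hn : 1 ≤ n) (c : ℂ) (hc : c ≠ 0) :
    ∑ k ∈ Finset.range n, (∑ j ∈ Finset.range n, (c * Complex.exp (2 * Real.pi * Complex.I / n) ^ k) ^ j) *
      (∑ l ∈ Finset.range n, ((c * Complex.exp (2 * Real.pi * Complex.I / n) ^ k)⁻¹) ^ l) = (n:ℂ)^2 := by
  have h1 : ∀ k, (∑ j ∈ Finset.range n, (c * Complex.exp (2 * Real.pi * Complex.I / n) ^ k) ^ j) *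
      (∑ l ∈ Finset.range n, ((c * Complex.exp (2 * Real.pi * Complex.I / n) ^ k)⁻¹) ^ l)
      = ∑ j ∈ Finset.range n, ∑ l ∈ Finset.range n,
          (c * Complex.exp (2 * Real.pi * Complex.I / n) ^ k) ^ j *
          ((c * Complex.exp (2 * Real.pi * Complex.I / n) ^ k)⁻¹) ^ l := by
    intro k; rw [Finset.sum_mul_sum]
  simp only [h1]
  rw [Finset.sum_comm]
  have h2 : ∀ j ∈ Finset.range n, ∑ k ∈ Finset.range n, ∑ l ∈ Finset.range n,
      (c * Complex.exp (2 * Real.pi * Complex.I / n) ^ k) ^ j *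
      ((c * Complex.exp (2 * Real.pi * Complex.I / n) ^ k)⁻¹) ^ l
      = (n : ℂ) := by
    intro j hj
    rw [Finset.sum_comm]
    have h3 : ∀ l ∈ Finset.range n, ∑ k ∈ Finset.range n,
        (c * Complex.exp (2 * Real.pi * Complex.I / n) ^ k) ^ j *
        ((c * Complex.exp (2 * Real.pi * Complex.I / n) ^ k)⁻¹) ^ l
        = if j = l then (n:ℂ) else 0 := fun l hl =>
      root_sum n hn c hc j l (Finset.mem_range.1 hj) (Finset.mem_range.1 hl)
    rw [Finset.sum_congr rfl h3, Finset.sum_ite_eq (Finset.range n) j (fun _ => (n:ℂ)),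
      if_pos hj]
  rw [Finset.sum_congr rfl h2, Finset.sum_const, Finset.card_range, nsmul_eq_mul, sq]

open Complex Finset in
private lemma count_sum (n m : ℕ) (hm : m ≤ n) (x : ℂ) :
    ∑ j ∈ Finset.range n, ∑ l ∈ Finset.range n, (if j + m = l + n then x else 0) = m * x := by
  have h1 : ∀ j ∈ Finset.range n, (∑ l ∈ Finset.range n, if j + m = l + n then x else 0)
      = if n ≤ j + m then x else 0 := by
    intro j hj
    rcases le_or_gt n (j + m) with h | h
    · rw [if_pos h, Finset.sum_eq_single_of_mem (j + m - n)
        (Finset.mem_range.2 (by simp at hj; omega)) (fun b _ hb => if_neg (by omega))]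
      rw [if_pos (by omega)]
    · rw [if_neg (not_le.2 h)]
      exact Finset.sum_eq_zero fun l _ => if_neg (by omega)
  rw [Finset.sum_congr rfl h1, ← Finset.sum_filter]
  have h2 : Finset.filter (fun j => n ≤ j + m) (Finset.range n) = Finset.Ico (n - m) n := by
    ext j; simp [Finset.mem_filter, Finset.mem_range, Finset.mem_Ico]; omega
  rw [h2, Finset.sum_const, Nat.card_Ico, nsmul_eq_mul]
  congr 1
  have : n - (n - m) = m := by omega
  rw [this]

open Complex Finset in
private lemma interp_sum (n : ℕ) (hn : 1 ≤ n) (c : ℂ) (hc : c ≠ 0) (m : ℕ) (hm : m ≤ n) :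
    ∑ k ∈ Finset.range (2*n),
      (∑ j ∈ Finset.range n, (c * Complex.exp (2 * Real.pi * Complex.I / (2*n : ℕ)) ^ k) ^ j) *
      (∑ l ∈ Finset.range n, ((c * Complex.exp (2 * Real.pi * Complex.I / (2*n : ℕ)) ^ k)⁻¹) ^ l) *
      ((c * Complex.exp (2 * Real.pi * Complex.I / (2*n : ℕ)) ^ k)⁻¹) ^ n *
      (c * Complex.exp (2 * Real.pi * Complex.I / (2*n : ℕ)) ^ k) ^ m
    = 2 * n * m := by
  set ζ : ℂ := Complex.exp (2 * Real.pi * Complex.I / (2*n : ℕ)) with hζ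
  have h1 : ∀ k, (∑ j ∈ Finset.range n, (c * ζ ^ k) ^ j) *
      (∑ l ∈ Finset.range n, ((c * ζ ^ k)⁻¹) ^ l) * ((c * ζ ^ k)⁻¹) ^ n * (c * ζ ^ k) ^ m
      = ∑ j ∈ Finset.range n, ∑ l ∈ Finset.range n,
          (c * ζ ^ k) ^ (j + m) * ((c * ζ ^ k)⁻¹) ^ (l + n) := by
    intro k
    rw [Finset.sum_mul_sum, Finset.sum_mul, Finset.sum_mul]
    apply Finset.sum_congr rfl; intro j _
    rw [Finset.sum_mul, Finset.sum_mul]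
    apply Finset.sum_congr rfl; intro l _
    rw [pow_add, pow_add]; ring
  simp only [h1]
  rw [Finset.sum_comm]
  have h2 : ∀ j ∈ Finset.range n, ∑ k ∈ Finset.range (2*n), ∑ l ∈ Finset.range n,
      (c * ζ ^ k) ^ (j + m) * ((c * ζ ^ k)⁻¹) ^ (l + n)
      = ∑ l ∈ Finset.range n, (if j + m = l + n then ((2*n : ℕ) : ℂ) else 0) := by
    intro j hj
    rw [Finset.sum_comm]
    apply Finset.sum_congr rfl
    intro l hl
    exact root_sum (2*n) (by omega) c hc (j+m) (l+n)
      (by simp at hj; omega) (by simp at hl; omega)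
  rw [Finset.sum_congr rfl h2, count_sum n m hm]
  push_cast; ring

open Complex Finset in
private lemma sum_parity {M : Type*} [AddCommMonoid M] (N : ℕ) (f : ℕ → M) :
    ∑ k ∈ Finset.range (2*N), f k
      = ∑ k ∈ Finset.range N, f (2*k) + ∑ k ∈ Finset.range N, f (2*k+1) := by
  induction N with
  | zero => simp
  | succ m ih =>
      have h2 : 2*(m+1) = (2*m + 1) + 1 := by ring
      rw [h2, Finset.sum_range_succ, Finset.sum_range_succ, ih, Finset.sum_range_succ,
        Finset.sum_range_succ]
      abel

open Complex Finset in
private lemma Malpha_nonneg (P : Polynomial ℂ) (n : ℕ) (β : ℝ) : 0 ≤ Malpha P n β :=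
  Real.sSup_nonneg (by rintro x ⟨l, _, rfl⟩; positivity)

open Complex Finset in
private lemma Malpha_ge (n : ℕ) (hn : 1 ≤ n) (P : Polynomial ℂ) (β : ℝ) (k : ℕ) (hk : k < n) :
    ‖P.eval (Complex.exp (Complex.I * ((β + 2 * k * Real.pi) / n)))‖ ≤ Malpha P n β := by
  have hbdd : BddAbove ((fun l : ℕ => ‖P.eval (Complex.exp (Complex.I * ((β + 2 * l * Real.pi) / n)))‖) '' Set.Icc 1 n) :=
    ((Set.finite_Icc 1 n).image _).bddAbove
  rcases Nat.eq_zero_or_pos k with hk0 | hk1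
  · subst hk0
    have hpt : Complex.exp (Complex.I * ((β + 2 * (0:ℕ) * Real.pi) / n))
        = Complex.exp (Complex.I * ((β + 2 * (n:ℕ) * Real.pi) / n)) := by
      have hn0 : (n : ℂ) ≠ 0 := Nat.cast_ne_zero.2 (by omega)
      have : Complex.I * ((β + 2 * (n:ℕ) * Real.pi) / n)
          = Complex.I * ((β + 2 * (0:ℕ) * Real.pi) / n) + 2 * Real.pi * Complex.I := by
        field_simp; ring
      rw [this, Complex.exp_add, Complex.exp_two_pi_mul_I, mul_one]
    rw [hpt]
    exact le_csSup hbdd ⟨n, Set.mem_Icc.2 ⟨hn, le_refl n⟩, rfl⟩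
  · exact le_csSup hbdd ⟨k, Set.mem_Icc.2 ⟨hk1, by omega⟩, rfl⟩

open Complex Finset in
private lemma master (n : ℕ) (hn : 1 ≤ n) (P : Polynomial ℂ) (hdeg : P.natDegree ≤ n)
    (z c : ℂ) (hz0 : z ≠ 0) (hc0 : c ≠ 0) :
    z * (derivative P).eval z * (2*(n:ℂ))
      = ∑ k ∈ Finset.range (2*n),
          ((∑ j ∈ Finset.range n, (c * Complex.exp (2 * Real.pi * Complex.I / (2*n : ℕ)) ^ k) ^ j) *
           (∑ l ∈ Finset.range n, ((c * Complex.exp (2 * Real.pi * Complex.I / (2*n : ℕ)) ^ k)⁻¹) ^ l)) *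
          ((c * Complex.exp (2 * Real.pi * Complex.I / (2*n : ℕ)) ^ k)⁻¹) ^ n *
          P.eval (z * (c * Complex.exp (2 * Real.pi * Complex.I / (2*n : ℕ)) ^ k)) := by
  set ω : ℂ := Complex.exp (2 * Real.pi * Complex.I / (2*n : ℕ)) with hω
  have hPev : ∀ w : ℂ, P.eval w = ∑ m ∈ Finset.range (n+1), P.coeff m * w ^ m := by
    intro w
    exact Polynomial.eval_eq_sum_range' (lt_of_le_of_lt hdeg (Nat.lt_succ_self n)) w
  have hrhs : ∑ k ∈ Finset.range (2*n),
      ((∑ j ∈ Finset.range n, (c * ω ^ k) ^ j) *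
       (∑ l ∈ Finset.range n, ((c * ω ^ k)⁻¹) ^ l)) *
      ((c * ω ^ k)⁻¹) ^ n * P.eval (z * (c * ω ^ k))
      = ∑ m ∈ Finset.range (n+1), P.coeff m * z ^ m * (2 * n * m) := by
    have step1 : ∀ k ∈ Finset.range (2*n),
        ((∑ j ∈ Finset.range n, (c * ω ^ k) ^ j) *
         (∑ l ∈ Finset.range n, ((c * ω ^ k)⁻¹) ^ l)) *
        ((c * ω ^ k)⁻¹) ^ n * P.eval (z * (c * ω ^ k))
        = ∑ m ∈ Finset.range (n+1), (P.coeff m * z ^ m) *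
            ((∑ j ∈ Finset.range n, (c * ω ^ k) ^ j) *
             (∑ l ∈ Finset.range n, ((c * ω ^ k)⁻¹) ^ l) *
             ((c * ω ^ k)⁻¹) ^ n * (c * ω ^ k) ^ m) := by
      intro k _
      rw [hPev, Finset.mul_sum]
      apply Finset.sum_congr rfl
      intro m _
      rw [mul_pow]
      ring
    rw [Finset.sum_congr rfl step1, Finset.sum_comm]
    apply Finset.sum_congr rfl
    intro m hm
    rw [← Finset.mul_sum, interp_sum n hn c hc0 m (by simp at hm; omega)]
  rw [hrhs]
  have hder : (derivative P).eval z
      = ∑ m ∈ Finset.range (n+1), P.coeff m * m * z ^ (m-1) := by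
    conv_lhs => rw [P.as_sum_range' (n+1) (lt_of_le_of_lt hdeg (Nat.lt_succ_self n))]
    rw [map_sum, Polynomial.eval_finset_sum]
    apply Finset.sum_congr rfl
    intro m _
    rw [Polynomial.derivative_monomial, Polynomial.eval_monomial]
  rw [hder, Finset.mul_sum, Finset.sum_mul]
  apply Finset.sum_congr rfl
  intro m _
  rcases m with _ | m
  · simp
  · rw [Nat.succ_sub_one, pow_succ]
    push_cast
    ring

open Complex Finset in
private lemma key (n : ℕ) (hn : 1 ≤ n) (P : Polynomial ℂ) (hdeg : P.natDegree ≤ n) (α : ℝ)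
    (z : ℂ) (hz : ‖z‖ = 1) :
    ‖(derivative P).eval z‖
      ≤ ((n:ℝ)/2) * (Malpha P n α + Malpha P n (α + Real.pi)) := by
  have hz0 : z ≠ 0 := by intro h; rw [h] at hz; simp at hz
  have hn0C : (n : ℂ) ≠ 0 := Nat.cast_ne_zero.2 (by omega)
  set ω : ℂ := Complex.exp (2 * Real.pi * Complex.I / (2*n : ℕ)) with hω
  have hω0 : ω ≠ 0 := Complex.exp_ne_zero _
  set a : ℂ := Complex.exp (((α / n : ℝ) : ℂ) * Complex.I) with ha
  set c : ℂ := a / z with hc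
  have ha1 : ‖a‖ = 1 := Complex.norm_exp_ofReal_mul_I _
  have hc0 : c ≠ 0 := div_ne_zero (Complex.exp_ne_zero _) hz0
  have hcabs : ‖c‖ = 1 := by rw [hc, norm_div, ha1, hz, div_one]
  have hωabs : ‖ω‖ = 1 := by
    rw [hω, Complex.norm_exp]
    have : (2 * (Real.pi:ℂ) * Complex.I / ((2*n : ℕ):ℂ)).re = 0 := by
      have h2n : ((2*n : ℕ):ℂ) = ((2*n : ℕ):ℝ) := by norm_cast
      rw [h2n, Complex.div_ofReal_re]
      simp
    rw [this, Real.exp_zero]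
  have hζabs : ∀ k : ℕ, ‖c * ω ^ k‖ = 1 := by
    intro k
    rw [norm_mul, norm_pow, hcabs, hωabs, one_pow, mul_one]
  have hζ0 : ∀ k : ℕ, c * ω ^ k ≠ 0 := fun k =>
    mul_ne_zero hc0 (pow_ne_zero _ hω0)
  -- node identity
  have hwk : ∀ k : ℕ, z * (c * ω ^ k)
      = Complex.exp (Complex.I * ((α + k * Real.pi) / n)) := by
    intro k
    have h1 : z * (c * ω ^ k) = a * ω ^ k := by
      rw [hc]; field_simp
    rw [h1, hω, ← Complex.exp_nat_mul, ha, ← Complex.exp_add]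
    congr 1
    have h2n0 : ((2*n : ℕ):ℂ) ≠ 0 := Nat.cast_ne_zero.2 (by omega)
    push_cast at h2n0 ⊢
    field_simp
  -- define S, r
  set S : ℕ → ℂ := fun k => ∑ j ∈ Finset.range n, (c * ω ^ k) ^ j with hS
  set T : ℕ → ℂ := fun k => ∑ l ∈ Finset.range n, ((c * ω ^ k)⁻¹) ^ l with hT
  set r : ℕ → ℝ := fun k => Complex.normSq (S k) with hr
  have hη : ∀ k, S k * T k = ((r k : ℝ) : ℂ) := by
    intro k
    have hinv : (c * ω ^ k)⁻¹ = starRingEnd ℂ (c * ω ^ k) := Complex.inv_eq_conj (hζabs k)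
    have : T k = starRingEnd ℂ (S k) := by
      rw [hT, hS]
      simp only [hinv, map_sum, map_pow]
    rw [this, Complex.mul_conj, hr]
  -- sums of r over even/odd
  have hω2 : ω ^ 2 = Complex.exp (2 * Real.pi * Complex.I / (n:ℂ)) := by
    rw [hω, ← Complex.exp_nat_mul]
    congr 1
    push_cast
    field_simp
  have heven : ∀ k : ℕ, c * ω ^ (2*k) = c * (Complex.exp (2 * Real.pi * Complex.I / (n:ℂ))) ^ k := by
    intro k; rw [pow_mul, hω2]
  have hodd : ∀ k : ℕ, c * ω ^ (2*k+1) = (c * ω) * (Complex.exp (2 * Real.pi * Complex.I / (n:ℂ))) ^ k := by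
    intro k
    rw [pow_add, pow_mul, hω2, pow_one]
    ring
  have hrevenC : (∑ k ∈ Finset.range n, ((r (2*k) : ℝ):ℂ)) = (n:ℂ)^2 := by
    have := fejer_sum n hn c hc0
    rw [← this]
    apply Finset.sum_congr rfl
    intro k _
    rw [← hη (2*k), hS, hT]
    simp only [heven k]
  have hroddC : (∑ k ∈ Finset.range n, ((r (2*k+1) : ℝ):ℂ)) = (n:ℂ)^2 := by
    have := fejer_sum n hn (c * ω) (mul_ne_zero hc0 hω0)
    rw [← this]
    apply Finset.sum_congr rfl
    intro k _
    rw [← hη (2*k+1), hS, hT]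
    simp only [hodd k]
  have hreven : ∑ k ∈ Finset.range n, r (2*k) = (n:ℝ)^2 := by
    have := hrevenC
    rw [← Complex.ofReal_sum] at this
    exact_mod_cast this
  have hrodd : ∑ k ∈ Finset.range n, r (2*k+1) = (n:ℝ)^2 := by
    have := hroddC
    rw [← Complex.ofReal_sum] at this
    exact_mod_cast this
  -- bounds on |P| at nodes
  have hpe : ∀ k : ℕ, k < n →
      ‖P.eval (z * (c * ω ^ (2*k)))‖ ≤ Malpha P n α := by
    intro k hk
    have h1 : z * (c * ω ^ (2*k)) = Complex.exp (Complex.I * ((α + 2 * (k:ℕ) * Real.pi) / n)) := by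
      rw [hwk (2*k)]
      congr 1
      push_cast
      ring
    rw [h1]
    exact Malpha_ge n hn P α k hk
  have hpo : ∀ k : ℕ, k < n →
      ‖P.eval (z * (c * ω ^ (2*k+1)))‖ ≤ Malpha P n (α + Real.pi) := by
    intro k hk
    have h1 : z * (c * ω ^ (2*k+1))
        = Complex.exp (Complex.I * (((α + Real.pi : ℝ) + 2 * (k:ℕ) * Real.pi) / n)) := by
      rw [hwk (2*k+1)]
      congr 1
      push_cast
      ring
    rw [h1]
    exact Malpha_ge n hn P (α + Real.pi) k hk
  -- main estimate
  have hmaster := master n hn P hdeg z c hz0 hc0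
  simp only [← hω] at hmaster
  have habs1 : ‖(derivative P).eval z‖ * (2*(n:ℝ))
      = ‖z * (derivative P).eval z * (2*(n:ℂ))‖ := by
    rw [norm_mul, norm_mul, hz, one_mul]
    congr 1
    rw [show (2*(n:ℂ)) = (((2*(n:ℝ)) : ℝ) : ℂ) by push_cast; ring, Complex.norm_real, Real.norm_eq_abs]
    exact (_root_.abs_of_nonneg (by positivity)).symm
  have habs2 : ‖z * (derivative P).eval z * (2*(n:ℂ))‖
      ≤ ∑ k ∈ Finset.range (2*n), r k * ‖P.eval (z * (c * ω ^ k))‖ := by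
    rw [hmaster]
    refine le_trans (norm_sum_le _ _) (le_of_eq (Finset.sum_congr rfl ?_))
    intro k _
    rw [norm_mul, norm_mul, hη k, Complex.norm_real, Real.norm_eq_abs,
      _root_.abs_of_nonneg (Complex.normSq_nonneg _),
      norm_pow, norm_inv, hζabs, inv_one, one_pow, mul_one]
  have hsplit : ∑ k ∈ Finset.range (2*n), r k * ‖P.eval (z * (c * ω ^ k))‖
      = (∑ k ∈ Finset.range n, r (2*k) * ‖P.eval (z * (c * ω ^ (2*k)))‖)
      + (∑ k ∈ Finset.range n, r (2*k+1) * ‖P.eval (z * (c * ω ^ (2*k+1)))‖) :=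
    sum_parity n _
  have hbe : ∑ k ∈ Finset.range n, r (2*k) * ‖P.eval (z * (c * ω ^ (2*k)))‖
      ≤ (n:ℝ)^2 * Malpha P n α := by
    rw [← hreven, Finset.sum_mul]
    apply Finset.sum_le_sum
    intro k hk
    exact mul_le_mul_of_nonneg_left (hpe k (Finset.mem_range.1 hk)) (Complex.normSq_nonneg _)
  have hbo : ∑ k ∈ Finset.range n, r (2*k+1) * ‖P.eval (z * (c * ω ^ (2*k+1)))‖
      ≤ (n:ℝ)^2 * Malpha P n (α + Real.pi) := by
    rw [← hrodd, Finset.sum_mul]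
    apply Finset.sum_le_sum
    intro k hk
    exact mul_le_mul_of_nonneg_left (hpo k (Finset.mem_range.1 hk)) (Complex.normSq_nonneg _)
  have hfin : ‖(derivative P).eval z‖ * (2*(n:ℝ))
      ≤ (n:ℝ)^2 * Malpha P n α + (n:ℝ)^2 * Malpha P n (α + Real.pi) := by
    rw [habs1]
    calc ‖z * (derivative P).eval z * (2*(n:ℂ))‖
        ≤ ∑ k ∈ Finset.range (2*n), r k * ‖P.eval (z * (c * ω ^ k))‖ := habs2
      _ = _ := hsplit
      _ ≤ _ := add_le_add hbe hbo
  have hnpos : (0:ℝ) < n := by exact_mod_cast hn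
  nlinarith [hfin]

theorem stmt_2 (n : ℕ) (hn : 1 ≤ n) (P : Polynomial ℂ) (hdeg : P.natDegree = n) (α : ℝ) :
    maxSphere (derivative P) 1 ≤ (n / 2) * (Malpha P n α + Malpha P n (α + Real.pi)) := by
  apply Real.sSup_le
  · rintro x ⟨z, hz, rfl⟩
    have hz1 : ‖z‖ = 1 := by
      have := Metric.mem_sphere.1 hz
      simpa [Complex.dist_eq] using this
    exact key n hn P (le_of_eq hdeg) α z hz1
  · have h1 := Malpha_nonneg P n α
    have h2 := Malpha_nonneg P n (α + Real.pi)
    have h3 : (0:ℝ) ≤ (n:ℝ)/2 := by positivity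
    nlinarith
end

section
/- If P(z) is a complex polynomial of degree n, then max_{|z|=1} |P'(z)| ≥ (n/2)·(2·max_{|z|=1}|P(z)| − (M_0 + M_π)), where M_α = max_{1 ≤ l ≤ n} |P(e^{i(α+2lπ)/n})|. -/
open Polynomial

namespace Stmt3Aux

open Complex Finset Polynomial

local notation "conj'" => (starRingEnd ℂ)

lemma geom_cycle {n : ℕ} (hn : 1 ≤ n) {x : ℂ} (hx : x ^ n = 1) :
    ∑ l ∈ Finset.Icc 1 n, x ^ l = if x = 1 then (n : ℂ) else 0 := by
  split_ifs with h
  · subst h; simp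
  · have h1 : ∑ l ∈ Finset.Icc 1 n, x ^ l = x * ∑ i ∈ Finset.range n, x ^ i := by
      rw [← Finset.Ico_add_one_right_eq_Icc, Finset.sum_Ico_eq_sum_range]
      simp only [Nat.add_sub_cancel]
      rw [Finset.mul_sum]
      exact Finset.sum_congr rfl fun i _ => by rw [pow_add, pow_one]
    have h2 : (∑ i ∈ Finset.range n, x ^ i) * (x - 1) = x ^ n - 1 := geom_sum_mul x n
    have h3 : (∑ i ∈ Finset.range n, x ^ i) * (x - 1) = 0 := by rw [h2, hx, sub_self]
    rcases mul_eq_zero.mp h3 with h4 | h4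
    · rw [h1, h4, mul_zero]
    · exact absurd (sub_eq_zero.mp h4) h

lemma window {n j j' m : ℕ} (hn : 1 ≤ n) (hj : j < n) (hj' : j' < n) (hm : m ≤ n)
    (h : n ∣ (j + m + (n - 1) * j')) : j' = j + m ∨ j + m = j' + n := by
  obtain ⟨n0, rfl⟩ : ∃ n0, n = n0 + 1 := ⟨n - 1, by omega⟩
  simp only [Nat.add_sub_cancel] at h
  rcases le_or_gt j' (j + m) with hc | hc
  · have hd : (n0 + 1) ∣ (j + m - j') := by
      have h2 : (n0 + 1) ∣ (n0 + 1) * j' := dvd_mul_right _ _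
      have h3 := Nat.dvd_sub h h2
      have he : (j + m + n0 * j') - (n0 + 1) * j' = j + m - j' := by
        rw [Nat.succ_mul, Nat.add_comm (n0 * j') j']
        exact Nat.add_sub_add_right (j + m) (n0 * j') j'
      rwa [he] at h3
    obtain ⟨k, hk⟩ := hd
    have hk1 : k ≤ 1 := by
      by_contra hcc
      push_neg at hcc
      have : (n0 + 1) * 2 ≤ (n0 + 1) * k := Nat.mul_le_mul_left _ hcc
      omega
    interval_cases k <;> omega
  · exfalso
    have hd : (n0 + 1) ∣ (j' - (j + m)) := by
      have h2 : (n0 + 1) ∣ (n0 + 1) * j' := dvd_mul_right _ _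
      have h3 := Nat.dvd_sub h2 h
      have he : (n0 + 1) * j' - (j + m + n0 * j') = j' - (j + m) := by
        rw [Nat.succ_mul, Nat.add_comm (n0 * j') j']
        exact Nat.add_sub_add_right j' (n0 * j') (j + m)
      rwa [he] at h3
    have := Nat.le_of_dvd (by omega) hd
    omega



variable {n : ℕ}

lemma lsum {n : ℕ} (hn : 1 ≤ n) (z V w0 : ℂ)
    (hVn : V ^ n = 1) (m : ℕ) :
    ∑ l ∈ Finset.Icc 1 n,
      ((∑ j ∈ Finset.range n, (w0 * V ^ l * conj' z) ^ j) *
        (∑ j' ∈ Finset.range n, (conj' (w0 * V ^ l) * z) ^ j') * (w0 * V ^ l) ^ m)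
    = ∑ j ∈ Finset.range n, ∑ j' ∈ Finset.range n,
        (conj' z) ^ j * z ^ j' * w0 ^ (j + m) * (conj' w0) ^ j' *
          (if V ^ (j + m) * (conj' V) ^ j' = 1 then (n : ℂ) else 0) := by
  have step1 : ∀ l ∈ Finset.Icc 1 n,
      ((∑ j ∈ Finset.range n, (w0 * V ^ l * conj' z) ^ j) *
        (∑ j' ∈ Finset.range n, (conj' (w0 * V ^ l) * z) ^ j') * (w0 * V ^ l) ^ m)
      = ∑ j ∈ Finset.range n, ∑ j' ∈ Finset.range n,
          ((conj' z) ^ j * z ^ j' * w0 ^ (j + m) * (conj' w0) ^ j') *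
            (V ^ (j + m) * (conj' V) ^ j') ^ l := by
    intro l _
    rw [Finset.sum_mul_sum]
    rw [Finset.sum_mul]
    refine Finset.sum_congr rfl fun j _ => ?_
    rw [Finset.sum_mul]
    refine Finset.sum_congr rfl fun j' _ => ?_
    simp only [map_mul, map_pow]
    ring
  rw [Finset.sum_congr rfl step1]
  rw [Finset.sum_comm]
  refine Finset.sum_congr rfl fun j _ => ?_
  rw [Finset.sum_comm]
  refine Finset.sum_congr rfl fun j' _ => ?_
  rw [← Finset.mul_sum]
  congr 1
  refine geom_cycle hn ?_
  rw [mul_pow, ← pow_mul, ← pow_mul, mul_comm (j+m) n, mul_comm j' n, pow_mul, pow_mul,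
    hVn, ← map_pow, hVn]
  simp


-- condition rewrite: V^(j+m) * conjV^(j') = 1 ↔ n ∣ j+m+(n-1)j'
lemma cond_iff {n : ℕ} (hn : 1 ≤ n) {V : ℂ} (hVc : conj' V = V ^ (n - 1))
    (hV1 : ∀ r : ℕ, (V ^ r = 1 ↔ n ∣ r)) (a b : ℕ) :
    (V ^ a * (conj' V) ^ b = 1) ↔ n ∣ (a + (n - 1) * b) := by
  rw [hVc, ← pow_mul, ← pow_add, hV1]

-- main per-term evaluation (combined classes)
lemma term_eval {n j j' m : ℕ} (hn : 1 ≤ n) (hj : j < n) (hj' : j' < n) (hm : m ≤ n)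
    {z V ζ : ℂ} (hz : conj' z * z = 1)
    (hVc : conj' V = V ^ (n - 1)) (hV1 : ∀ r : ℕ, (V ^ r = 1 ↔ n ∣ r))
    (hζc : ζ * conj' ζ = 1) (hζn : ζ ^ n = -1) :
    (conj' z) ^ j * z ^ j' * (1:ℂ) ^ (j + m) * ((1:ℂ)) ^ j' *
        (if V ^ (j + m) * (conj' V) ^ j' = 1 then (n : ℂ) else 0)
    + (conj' z) ^ j * z ^ j' * ζ ^ (j + m) * (conj' ζ) ^ j' *
        (if V ^ (j + m) * (conj' V) ^ j' = 1 then (n : ℂ) else 0)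
    = if j' = j + m then 2 * n * z ^ m else 0 := by
  simp only [cond_iff hn hVc hV1]
  by_cases hd : n ∣ (j + m + (n - 1) * j')
  · rcases window hn hj hj' hm hd with hcase | hcase
    · subst hcase
      have hne : j + m = j + m := rfl
      simp only [if_pos hd, if_pos rfl, one_pow, one_mul, mul_one]
      have hE : (conj' z) ^ j * z ^ (j + m) = z ^ m := by
        rw [pow_add, ← mul_assoc, ← mul_pow, hz, one_pow, one_mul]
      have hZ : ζ ^ (j + m) * (conj' ζ) ^ (j + m) = 1 := by
        rw [← mul_pow, hζc, one_pow]
      calc (conj' z) ^ j * z ^ (j + m) * (n:ℂ)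
          + (conj' z) ^ j * z ^ (j + m) * ζ ^ (j + m) * (conj' ζ) ^ (j + m) * (n:ℂ)
          = (conj' z) ^ j * z ^ (j + m) * (n:ℂ) * (1 + ζ ^ (j + m) * (conj' ζ) ^ (j + m)) := by ring
        _ = 2 * n * z ^ m := by rw [hZ, hE]; ring
    · have hne : ¬ (j' = j + m) := by omega
      rw [if_pos hd, if_neg hne]
      have hZ : ζ ^ (j + m) * (conj' ζ) ^ j' = -1 := by
        rw [hcase, pow_add, hζn, mul_comm (ζ ^ j') (-1), mul_assoc, ← mul_pow, hζc, one_pow]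
        ring
      calc (conj' z) ^ j * z ^ j' * (1:ℂ) ^ (j + m) * (1:ℂ) ^ j' * (n:ℂ)
          + (conj' z) ^ j * z ^ j' * ζ ^ (j + m) * (conj' ζ) ^ j' * (n:ℂ)
          = (conj' z) ^ j * z ^ j' * (n:ℂ) * (1 + ζ ^ (j + m) * (conj' ζ) ^ j') := by ring
        _ = 0 := by rw [hZ]; ring
  · have hne : ¬ (j' = j + m) := by
      intro hcc
      apply hd
      subst hcc
      have : j + m + (n - 1) * (j + m) = n * (j + m) := by
        cases n with
        | zero => omega
        | succ n0 => simp only [Nat.add_sub_cancel]; ring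
      rw [this]
      exact dvd_mul_right _ _
    rw [if_neg hd, if_neg hne]
    ring

-- counting lemma
lemma count {n m : ℕ} (hm : m ≤ n) (C : ℂ) :
    ∑ j ∈ Finset.range n, ∑ j' ∈ Finset.range n, (if j' = j + m then C else 0)
      = ((n - m : ℕ) : ℂ) * C := by
  have inner : ∀ j ∈ Finset.range n,
      (∑ j' ∈ Finset.range n, (if j' = j + m then C else 0))
        = if j + m ∈ Finset.range n then C else 0 := by
    intro j _
    exact Finset.sum_ite_eq' (Finset.range n) (j + m) (fun _ => C)
  rw [Finset.sum_congr rfl inner]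
  have : ∀ j ∈ Finset.range n, (if j + m ∈ Finset.range n then C else 0)
      = if j ∈ Finset.range (n - m) then C else 0 := by
    intro j _
    refine if_congr ?_ rfl rfl
    simp only [Finset.mem_range]
    omega
  rw [Finset.sum_congr rfl this, Finset.sum_ite_mem]
  have : Finset.range n ∩ Finset.range (n - m) = Finset.range (n - m) :=
    Finset.inter_eq_right.mpr (Finset.range_subset_range.mpr (by omega))
  rw [this, Finset.sum_const, Finset.card_range, nsmul_eq_mul]


-- MASTER: the two-class m-th moment sum
lemma master {n : ℕ} (hn : 1 ≤ n) {z V ζ : ℂ} (hz : conj' z * z = 1)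
    (hVn : V ^ n = 1) (hVc : conj' V = V ^ (n - 1)) (hV1 : ∀ r : ℕ, (V ^ r = 1 ↔ n ∣ r))
    (hζc : ζ * conj' ζ = 1) (hζn : ζ ^ n = -1) {m : ℕ} (hm : m ≤ n) :
    (∑ l ∈ Finset.Icc 1 n,
      ((∑ j ∈ Finset.range n, (V ^ l * conj' z) ^ j) *
        (∑ j' ∈ Finset.range n, (conj' (V ^ l) * z) ^ j') * (V ^ l) ^ m))
    + (∑ l ∈ Finset.Icc 1 n,
      ((∑ j ∈ Finset.range n, (ζ * V ^ l * conj' z) ^ j) *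
        (∑ j' ∈ Finset.range n, (conj' (ζ * V ^ l) * z) ^ j') * (ζ * V ^ l) ^ m))
    = 2 * n * ((n - m : ℕ) : ℂ) * z ^ m := by
  have h1 := lsum hn z V 1 hVn m
  simp only [one_mul, map_one] at h1
  have h2 := lsum hn z V ζ hVn m
  rw [h1, h2, ← Finset.sum_add_distrib]
  have key : ∀ j ∈ Finset.range n,
      ((∑ j' ∈ Finset.range n,
        (conj' z) ^ j * z ^ j' * (1:ℂ) ^ (j + m) * (1:ℂ) ^ j' *
          (if V ^ (j + m) * (conj' V) ^ j' = 1 then (n : ℂ) else 0))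
      + (∑ j' ∈ Finset.range n,
        (conj' z) ^ j * z ^ j' * ζ ^ (j + m) * (conj' ζ) ^ j' *
          (if V ^ (j + m) * (conj' V) ^ j' = 1 then (n : ℂ) else 0)))
      = ∑ j' ∈ Finset.range n, (if j' = j + m then 2 * n * z ^ m else 0) := by
    intro j hj
    rw [← Finset.sum_add_distrib]
    exact Finset.sum_congr rfl fun j' hj' =>
      term_eval hn (Finset.mem_range.mp hj) (Finset.mem_range.mp hj') hm hz hVc hV1 hζc hζn
  rw [Finset.sum_congr rfl key, count hm (2 * (n:ℂ) * z ^ m)]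
  ring

-- class sums: sum of Fejér weights over one class is n*n
lemma class_sum {n : ℕ} (hn : 1 ≤ n) {z V w0 : ℂ} (hz : conj' z * z = 1)
    (hVn : V ^ n = 1) (hVc : conj' V = V ^ (n - 1)) (hV1 : ∀ r : ℕ, (V ^ r = 1 ↔ n ∣ r))
    (hw0 : w0 * conj' w0 = 1) :
    ∑ l ∈ Finset.Icc 1 n,
      ((∑ j ∈ Finset.range n, (w0 * V ^ l * conj' z) ^ j) *
        (∑ j' ∈ Finset.range n, (conj' (w0 * V ^ l) * z) ^ j'))
    = (n : ℂ) * n := by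
  have h1 := lsum hn z V w0 hVn 0
  simp only [pow_zero, mul_one, Nat.add_zero] at h1
  rw [h1]
  have step : ∀ j ∈ Finset.range n, ∀ j' ∈ Finset.range n,
      (conj' z) ^ j * z ^ j' * w0 ^ j * (conj' w0) ^ j' *
          (if V ^ j * (conj' V) ^ j' = 1 then (n : ℂ) else 0)
      = if j' = j then (n : ℂ) else 0 := by
    intro j hj j' hj'
    simp only [cond_iff hn hVc hV1]
    by_cases hd : n ∣ (j + (n - 1) * j')
    · have := window hn (Finset.mem_range.mp hj) (Finset.mem_range.mp hj')
        (Nat.zero_le n) (by simpa using hd)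
      have hjn := Finset.mem_range.mp hj
      have hjn' := Finset.mem_range.mp hj'
      have hjj : j' = j := by omega
      subst hjj
      rw [if_pos (by simpa using hd), if_pos rfl]
      have hE : (conj' z) ^ j' * z ^ j' = 1 := by rw [← mul_pow, hz, one_pow]
      have hW : w0 ^ j' * (conj' w0) ^ j' = 1 := by rw [← mul_pow, hw0, one_pow]
      calc (conj' z) ^ j' * z ^ j' * w0 ^ j' * (conj' w0) ^ j' * (n:ℂ)
          = ((conj' z) ^ j' * z ^ j') * (w0 ^ j' * (conj' w0) ^ j') * (n:ℂ) := by ring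
        _ = (n:ℂ) := by rw [hE, hW]; ring
    · have hne : ¬ (j' = j) := by
        intro hcc; subst hcc
        apply hd
        have : j' + (n - 1) * j' = n * j' := by
          cases n with
          | zero => omega
          | succ n0 => simp only [Nat.add_sub_cancel]; ring
        rw [this]; exact dvd_mul_right _ _
      rw [if_neg hd, if_neg hne, mul_zero]
  calc ∑ j ∈ Finset.range n, ∑ j' ∈ Finset.range n,
        (conj' z) ^ j * z ^ j' * w0 ^ j * (conj' w0) ^ j' *
          (if V ^ j * (conj' V) ^ j' = 1 then (n : ℂ) else 0)
      = ∑ j ∈ Finset.range n, ∑ j' ∈ Finset.range n, (if j' = j then (n : ℂ) else 0) := by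
        refine Finset.sum_congr rfl fun j hj => Finset.sum_congr rfl fun j' hj' => step j hj j' hj'
    _ = ∑ j ∈ Finset.range n, (n : ℂ) := by
        refine Finset.sum_congr rfl fun j hj => ?_
        rw [Finset.sum_ite_eq' (Finset.range n) j (fun _ => (n:ℂ))]
        exact if_pos hj
    _ = (n : ℂ) * n := by rw [Finset.sum_const, Finset.card_range, nsmul_eq_mul]


lemma deriv_eval {n : ℕ} (P : Polynomial ℂ) (hP : P.natDegree ≤ n) (z : ℂ) :
    z * (derivative P).eval z = ∑ m ∈ Finset.range (n + 1), P.coeff m * m * z ^ m := by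
  have hd : (derivative P).natDegree < n + 1 :=
    lt_of_le_of_lt (Polynomial.natDegree_derivative_le P) (by omega)
  rw [Polynomial.eval_eq_sum_range' hd z, Finset.mul_sum]
  have lhs : ∀ i ∈ Finset.range (n+1), z * ((derivative P).coeff i * z ^ i)
      = P.coeff (i+1) * (i+1) * z ^ (i+1) := by
    intro i _
    rw [Polynomial.coeff_derivative]
    push_cast
    ring
  rw [Finset.sum_congr rfl lhs]
  rw [Finset.sum_range_succ' (fun m => P.coeff m * m * z ^ m) n]
  have h0 : P.coeff 0 * (0:ℕ) * z ^ 0 = 0 := by simp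
  rw [h0, add_zero]
  rw [Finset.sum_range_succ (fun i => P.coeff (i+1) * (i+1) * z ^ (i+1)) n]
  have hn1 : P.coeff (n+1) = 0 := Polynomial.coeff_eq_zero_of_natDegree_lt (by omega)
  rw [hn1]
  simp

-- the identity
lemma identity {n : ℕ} (hn : 1 ≤ n) {z V ζ : ℂ} (hz : conj' z * z = 1)
    (hVn : V ^ n = 1) (hVc : conj' V = V ^ (n - 1)) (hV1 : ∀ r : ℕ, (V ^ r = 1 ↔ n ∣ r))
    (hζc : ζ * conj' ζ = 1) (hζn : ζ ^ n = -1)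
    (P : Polynomial ℂ) (hP : P.natDegree ≤ n) :
    2 * (n:ℂ)^2 * P.eval z
    = (∑ l ∈ Finset.Icc 1 n,
        ((∑ j ∈ Finset.range n, (V ^ l * conj' z) ^ j) *
          (∑ j' ∈ Finset.range n, (conj' (V ^ l) * z) ^ j') * P.eval (V ^ l)))
    + (∑ l ∈ Finset.Icc 1 n,
        ((∑ j ∈ Finset.range n, (ζ * V ^ l * conj' z) ^ j) *
          (∑ j' ∈ Finset.range n, (conj' (ζ * V ^ l) * z) ^ j') * P.eval (ζ * V ^ l)))
    + 2 * n * (z * (derivative P).eval z) := by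
  have hPn : P.natDegree < n + 1 := by omega
  have expand : ∀ w : ℂ, P.eval w = ∑ m ∈ Finset.range (n+1), P.coeff m * w ^ m :=
    fun w => Polynomial.eval_eq_sum_range' hPn w
  have swap : ∀ A : ℕ → ℂ, ∀ W : ℕ → ℂ,
      (∑ l ∈ Finset.Icc 1 n, A l * P.eval (W l))
      = ∑ m ∈ Finset.range (n+1), P.coeff m * (∑ l ∈ Finset.Icc 1 n, A l * (W l) ^ m) := by
    intro A W
    calc ∑ l ∈ Finset.Icc 1 n, A l * P.eval (W l)
        = ∑ l ∈ Finset.Icc 1 n, ∑ m ∈ Finset.range (n+1), A l * (P.coeff m * (W l) ^ m) := by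
          refine Finset.sum_congr rfl fun l _ => ?_
          rw [expand (W l), Finset.mul_sum]
      _ = ∑ m ∈ Finset.range (n+1), ∑ l ∈ Finset.Icc 1 n, A l * (P.coeff m * (W l) ^ m) :=
          Finset.sum_comm
      _ = ∑ m ∈ Finset.range (n+1), P.coeff m * (∑ l ∈ Finset.Icc 1 n, A l * (W l) ^ m) := by
          refine Finset.sum_congr rfl fun m _ => ?_
          rw [Finset.mul_sum]
          exact Finset.sum_congr rfl fun l _ => by ring
  have e1 := swap (fun l => (∑ j ∈ Finset.range n, (V ^ l * conj' z) ^ j) *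
      (∑ j' ∈ Finset.range n, (conj' (V ^ l) * z) ^ j')) (fun l => V ^ l)
  have e2 := swap (fun l => (∑ j ∈ Finset.range n, (ζ * V ^ l * conj' z) ^ j) *
      (∑ j' ∈ Finset.range n, (conj' (ζ * V ^ l) * z) ^ j')) (fun l => ζ * V ^ l)
  rw [e1, e2, deriv_eval P hP z, Finset.mul_sum, ← Finset.sum_add_distrib,
    ← Finset.sum_add_distrib]
  have lhs : 2 * (n:ℂ)^2 * P.eval z = ∑ m ∈ Finset.range (n+1),
      2 * (n:ℂ)^2 * (P.coeff m * z ^ m) := by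
    rw [expand z, Finset.mul_sum]
  rw [lhs]
  refine Finset.sum_congr rfl fun m hm => ?_
  have hmn : m ≤ n := by have := Finset.mem_range.mp hm; omega
  have hmaster := master hn hz hVn hVc hV1 hζc hζn hmn
  have hcast : ((n - m : ℕ) : ℂ) = (n : ℂ) - m := by
    push_cast [Nat.cast_sub hmn]
    ring
  calc 2 * (n:ℂ)^2 * (P.coeff m * z ^ m)
      = P.coeff m * (2 * n * (((n:ℂ) - m) + m) * z ^ m) := by ring
    _ = P.coeff m * (2 * n * ((n - m : ℕ) : ℂ) * z ^ m) + 2 * n * (P.coeff m * m * z ^ m) := by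
        rw [hcast]; ring
    _ = _ := by rw [← hmaster]; ring


lemma facts (hn : 1 ≤ n) :
    let V : ℂ := Complex.exp (2 * Real.pi * Complex.I / n)
    let ζ : ℂ := Complex.exp (Real.pi * Complex.I / n)
    V ^ n = 1 ∧ conj' V = V ^ (n - 1) ∧ (∀ r : ℕ, (V ^ r = 1 ↔ n ∣ r)) ∧
      ζ * conj' ζ = 1 ∧ ζ ^ n = -1 := by
  intro V ζ
  have hn0 : (n:ℂ) ≠ 0 := Nat.cast_ne_zero.mpr (by omega)
  have hprim : IsPrimitiveRoot V n := Complex.isPrimitiveRoot_exp n (by omega)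
  have hVn : V ^ n = 1 := hprim.pow_eq_one
  have hV1 : ∀ r : ℕ, (V ^ r = 1 ↔ n ∣ r) := fun r => hprim.pow_eq_one_iff_dvd r
  refine ⟨hVn, ?_, hV1, ?_, ?_⟩
  · -- conj V = V^(n-1)
    have h1 : conj' V * V = 1 := by
      show conj' V * V = 1
      rw [← Complex.exp_conj]
      rw [← Complex.exp_add]
      have : (starRingEnd ℂ) (2 * Real.pi * Complex.I / n) + 2 * Real.pi * Complex.I / n = 0 := by
        simp only [map_div₀, map_mul, Complex.conj_I, Complex.conj_ofReal, map_ofNat,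
          Complex.conj_natCast]
        ring
      rw [this, Complex.exp_zero]
    have h2 : V ^ (n - 1) * V = 1 := by
      rw [← pow_succ, Nat.sub_add_cancel hn, hVn]
    have hVne : V ≠ 0 := Complex.exp_ne_zero _
    field_simp at h1 h2
    calc conj' V = 1 / V := by rw [← h1]; field_simp
      _ = V ^ (n-1) := by rw [← h2]; field_simp
  · -- ζ * conj ζ = 1
    rw [← Complex.exp_conj, ← Complex.exp_add]
    have : Real.pi * Complex.I / n + (starRingEnd ℂ) (Real.pi * Complex.I / n) = 0 := by
      simp only [map_div₀, map_mul, Complex.conj_I, Complex.conj_ofReal, Complex.conj_natCast]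
      ring
    rw [this, Complex.exp_zero]
  · -- ζ^n = -1
    rw [← Complex.exp_nat_mul]
    have : (n:ℂ) * (Real.pi * Complex.I / n) = Real.pi * Complex.I := by field_simp
    rw [this, Complex.exp_pi_mul_I]


-- membership bound into Malpha
lemma le_Malpha (P : Polynomial ℂ) (α : ℝ) (l : ℕ) (hl : l ∈ Finset.Icc 1 n) :
    ‖P.eval (Complex.exp (Complex.I * ((α + 2 * l * Real.pi) / n)))‖
      ≤ Malpha P n α := by
  apply le_csSup (((Set.finite_Icc 1 n).image _).bddAbove)
  exact ⟨l, by simpa [Set.mem_Icc] using Finset.mem_Icc.mp hl, rfl⟩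

-- point matching
lemma match0 (hn : 1 ≤ n) (l : ℕ) :
    Complex.exp (Complex.I * ((((0:ℝ):ℂ) + 2 * (l:ℂ) * ((Real.pi : ℝ):ℂ)) / ((n:ℕ):ℂ)))
      = (Complex.exp (2 * Real.pi * Complex.I / n)) ^ l := by
  rw [← Complex.exp_nat_mul]
  congr 1
  have hn0 : (n:ℂ) ≠ 0 := Nat.cast_ne_zero.mpr (by omega)
  push_cast
  field_simp
  ring

lemma match1 (hn : 1 ≤ n) (l : ℕ) :
    Complex.exp (Complex.I * ((((Real.pi : ℝ):ℂ) + 2 * (l:ℂ) * ((Real.pi : ℝ):ℂ)) / ((n:ℕ):ℂ)))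
      = Complex.exp (Real.pi * Complex.I / n) * (Complex.exp (2 * Real.pi * Complex.I / n)) ^ l := by
  rw [← Complex.exp_nat_mul, ← Complex.exp_add]
  congr 1
  have hn0 : (n:ℂ) ≠ 0 := Nat.cast_ne_zero.mpr (by omega)
  push_cast
  field_simp

lemma le_maxSphere_deriv (P : Polynomial ℂ) {z : ℂ} (hz : ‖z‖ = 1) :
    ‖(derivative P).eval z‖ ≤ maxSphere (derivative P) 1 := by
  apply le_csSup
  · exact IsCompact.bddAbove_image (isCompact_sphere 0 1)
      ((continuous_norm.comp (Polynomial.continuous _)).continuousOn)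
  · exact ⟨z, by simp [Metric.mem_sphere, Complex.dist_eq, hz], rfl⟩


lemma key (hn : 1 ≤ n) (P : Polynomial ℂ) (hP : P.natDegree ≤ n)
    (z : ℂ) (hz : ‖z‖ = 1) :
    2 * (n:ℝ)^2 * ‖P.eval z‖
      ≤ (n:ℝ)^2 * Malpha P n 0 + (n:ℝ)^2 * Malpha P n Real.pi
        + 2 * n * maxSphere (derivative P) 1 := by
  set V : ℂ := Complex.exp (2 * Real.pi * Complex.I / n) with hVdef
  set ζ : ℂ := Complex.exp (Real.pi * Complex.I / n) with hζdef
  obtain ⟨hVn, hVc, hV1, hζc, hζn⟩ := facts hn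
  have hzc : conj' z * z = 1 := by
    rw [mul_comm, Complex.mul_conj, Complex.normSq_eq_norm_sq, hz]
    norm_num
  have hid := identity hn hzc hVn hVc hV1 hζc hζn P hP
  -- conj relation for the second factors
  have hT : ∀ w : ℂ, (∑ j' ∈ Finset.range n, (conj' w * z) ^ j')
      = conj' (∑ j ∈ Finset.range n, (w * conj' z) ^ j) := by
    intro w
    rw [map_sum]
    exact Finset.sum_congr rfl fun j _ => by
      rw [map_pow, map_mul, Complex.conj_conj]
  -- class 0 bound
  have hclass : ∀ (w0 : ℂ), w0 * conj' w0 = 1 → ∀ M : ℝ,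
      (∀ l ∈ Finset.Icc 1 n, ‖P.eval (w0 * V ^ l)‖ ≤ M) →
      ‖∑ l ∈ Finset.Icc 1 n,
        ((∑ j ∈ Finset.range n, (w0 * V ^ l * conj' z) ^ j) *
          (∑ j' ∈ Finset.range n, (conj' (w0 * V ^ l) * z) ^ j') * P.eval (w0 * V ^ l))‖
        ≤ (n:ℝ)^2 * M := by
    intro w0 hw0 M hM
    have habs : ∀ l ∈ Finset.Icc 1 n,
        ‖(∑ j ∈ Finset.range n, (w0 * V ^ l * conj' z) ^ j) *
          (∑ j' ∈ Finset.range n, (conj' (w0 * V ^ l) * z) ^ j') * P.eval (w0 * V ^ l)‖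
        ≤ Complex.normSq (∑ j ∈ Finset.range n, (w0 * V ^ l * conj' z) ^ j) * M := by
      intro l hl
      rw [hT (w0 * V ^ l), Complex.mul_conj, norm_mul, Complex.norm_real,
        Real.norm_of_nonneg (Complex.normSq_nonneg _)]
      exact mul_le_mul_of_nonneg_left (hM l hl) (Complex.normSq_nonneg _)
    calc ‖∑ l ∈ Finset.Icc 1 n,
          ((∑ j ∈ Finset.range n, (w0 * V ^ l * conj' z) ^ j) *
            (∑ j' ∈ Finset.range n, (conj' (w0 * V ^ l) * z) ^ j') * P.eval (w0 * V ^ l))‖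
        ≤ ∑ l ∈ Finset.Icc 1 n,
            ‖(∑ j ∈ Finset.range n, (w0 * V ^ l * conj' z) ^ j) *
              (∑ j' ∈ Finset.range n, (conj' (w0 * V ^ l) * z) ^ j') * P.eval (w0 * V ^ l)‖ :=
          norm_sum_le _ _
      _ ≤ ∑ l ∈ Finset.Icc 1 n,
            Complex.normSq (∑ j ∈ Finset.range n, (w0 * V ^ l * conj' z) ^ j) * M :=
          Finset.sum_le_sum habs
      _ = (∑ l ∈ Finset.Icc 1 n,
            Complex.normSq (∑ j ∈ Finset.range n, (w0 * V ^ l * conj' z) ^ j)) * M := by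
          rw [Finset.sum_mul]
      _ = (n:ℝ)^2 * M := by
          have hcs := class_sum hn hzc hVn hVc hV1 hw0
          rw [← hVdef] at hcs
          have hkey : (((∑ l ∈ Finset.Icc 1 n,
              Complex.normSq (∑ j ∈ Finset.range n, (w0 * V ^ l * conj' z) ^ j)) : ℝ) : ℂ)
              = (((n:ℝ)^2 : ℝ) : ℂ) := by
            push_cast
            calc (∑ l ∈ Finset.Icc 1 n,
                ((Complex.normSq (∑ j ∈ Finset.range n, (w0 * V ^ l * conj' z) ^ j) : ℝ) : ℂ))
                = ∑ l ∈ Finset.Icc 1 n,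
                  ((∑ j ∈ Finset.range n, (w0 * V ^ l * conj' z) ^ j) *
                    (∑ j' ∈ Finset.range n, (conj' (w0 * V ^ l) * z) ^ j')) := by
                  refine Finset.sum_congr rfl fun l _ => ?_
                  rw [hT (w0 * V ^ l), Complex.mul_conj]
              _ = (n : ℂ) * n := hcs
              _ = _ := by push_cast; ring
          have := Complex.ofReal_injective hkey
          rw [this]
  -- grid point bounds
  have hM0 : ∀ l ∈ Finset.Icc 1 n, ‖P.eval ((1:ℂ) * V ^ l)‖ ≤ Malpha P n 0 := by
    intro l hl
    have h := le_Malpha (n := n) P 0 l hl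
    rw [match0 hn l] at h
    rw [one_mul, hVdef]
    exact h
  have hM1 : ∀ l ∈ Finset.Icc 1 n, ‖P.eval (ζ * V ^ l)‖ ≤ Malpha P n Real.pi := by
    intro l hl
    have h := le_Malpha (n := n) P Real.pi l hl
    rw [match1 hn l] at h
    rw [hζdef, hVdef]
    exact h
  have hc0 := hclass 1 (by simp) (Malpha P n 0) hM0
  simp only [one_mul, map_one] at hc0
  have hc1 := hclass ζ hζc (Malpha P n Real.pi) hM1
  have hd : ‖2 * (n:ℂ) * (z * (Polynomial.derivative P).eval z)‖
      ≤ 2 * n * maxSphere (derivative P) 1 := by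
    have : ‖2 * (n:ℂ) * (z * (Polynomial.derivative P).eval z)‖
        = 2 * n * ‖(Polynomial.derivative P).eval z‖ := by
      simp [map_mul, hz, Complex.norm_natCast]
    rw [this]
    have h2n : (0:ℝ) ≤ 2 * n := by positivity
    exact mul_le_mul_of_nonneg_left (le_maxSphere_deriv P hz) h2n
  -- put together
  have habs : 2 * (n:ℝ)^2 * ‖P.eval z‖
      = ‖2 * (n:ℂ)^2 * P.eval z‖ := by
    simp [map_mul, map_pow, Complex.norm_natCast]
  rw [habs, hid, ← hVdef, ← hζdef]
  calc ‖_ + _ + _‖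
      ≤ ‖_ + _‖ + ‖_‖ := norm_add_le _ _
    _ ≤ ‖_‖ + ‖_‖ + ‖_‖ :=
        add_le_add_left (norm_add_le _ _) _
    _ ≤ (n:ℝ)^2 * Malpha P n 0 + (n:ℝ)^2 * Malpha P n Real.pi
        + 2 * n * maxSphere (derivative P) 1 := add_le_add (add_le_add hc0 hc1) hd


lemma stmt_3' (n : ℕ) (hn : 1 ≤ n) (P : Polynomial ℂ) (hdeg : P.natDegree = n) :
    maxSphere (derivative P) 1 ≥
      (n / 2) * (2 * maxSphere P 1 - (Malpha P n 0 + Malpha P n Real.pi)) := by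
  have hP : P.natDegree ≤ n := le_of_eq hdeg
  have hn0 : (0:ℝ) < n := by exact_mod_cast hn
  set M0 := Malpha P n 0 with hM0def
  set Mpi := Malpha P n Real.pi with hMpidef
  set MD := maxSphere (derivative P) 1 with hMDdef
  have hMP : maxSphere P 1 ≤ (M0 + Mpi) / 2 + MD / n := by
    refine csSup_le ⟨_, ⟨(1:ℂ), ?_, rfl⟩⟩ ?_
    · simp [Metric.mem_sphere]
    · rintro y ⟨w, hw, rfl⟩
      have hw1 : ‖w‖ = 1 := by
        simpa [Metric.mem_sphere, Complex.dist_eq] using hw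
      have hk := key hn P hP w hw1
      have h1 : ‖P.eval w‖ * (2*(n:ℝ)^2)
          ≤ (n:ℝ)^2 * M0 + (n:ℝ)^2 * Mpi + 2*n*MD := by
        rw [hM0def, hMpidef, hMDdef]
        linarith [hk]
      have h2 := (le_div_iff₀ (by positivity : (0:ℝ) < 2*(n:ℝ)^2)).mpr h1
      have h3 : ((n:ℝ)^2 * M0 + (n:ℝ)^2 * Mpi + 2*n*MD) / (2*(n:ℝ)^2)
          = (M0 + Mpi) / 2 + MD / n := by
        field_simp
      rw [h3] at h2
      exact h2
  have h4 := mul_le_mul_of_nonneg_left hMP (le_of_lt hn0)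
  have h5 : (n:ℝ) * ((M0 + Mpi) / 2 + MD / n) = n * (M0 + Mpi) / 2 + MD := by
    field_simp
  rw [ge_iff_le]
  nlinarith [h4, h5]


end Stmt3Aux

theorem stmt_3 (n : ℕ) (hn : 1 ≤ n) (P : Polynomial ℂ) (hdeg : P.natDegree = n) :
    maxSphere (derivative P) 1 ≥
      (n / 2) * (2 * maxSphere P 1 - (Malpha P n 0 + Malpha P n Real.pi)) :=
  Stmt3Aux.stmt_3' n hn P hdeg
end

section
/- If P(z) is a complex polynomial of degree n having no zeros in |z| < 1, then max_{|z|=1} |P'(z)| ≤ (n/2) · max_{|z|=1} |P(z)|. -/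
open Polynomial

lemma re_div_le_half (z r : ℂ) (hz : ‖z‖ = 1) (hr : 1 ≤ ‖r‖)
    (hne : z - r ≠ 0) : (z / (z - r)).re ≤ 1/2 := by
  have h1 : ‖z / (z - r)‖ ≤ ‖r / (z - r)‖ := by
    rw [norm_div, norm_div, hz]
    gcongr
  have h2 : r / (z - r) = z / (z - r) - 1 := by field_simp; ring
  set w := z / (z - r)
  rw [h2] at h1
  have h3 : Complex.normSq w ≤ Complex.normSq (w - 1) := by
    rw [← Complex.sq_norm, ← Complex.sq_norm]
    exact pow_le_pow_left₀ (norm_nonneg _) h1 2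
  have h4 := Complex.normSq_sub w 1
  simp [Complex.normSq_one] at h4
  nlinarith [h3, h4]

lemma re_logderiv_prod (z : ℂ) (hz : ‖z‖ = 1) (s : Multiset ℂ)
    (hs : ∀ r ∈ s, 1 ≤ ‖r‖)
    (hne : eval z (s.map fun r => X - C r).prod ≠ 0) :
    (z * eval z (derivative (s.map fun r => X - C r).prod) /
      eval z (s.map fun r => X - C r).prod).re ≤ (Multiset.card s) / 2 := by
  induction s using Multiset.induction_on with
  | empty => simp
  | cons r t ih =>
    have hr : 1 ≤ ‖r‖ := hs r (Multiset.mem_cons_self r t)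
    have ht : ∀ x ∈ t, 1 ≤ ‖x‖ := fun x hx => hs x (Multiset.mem_cons_of_mem hx)
    rw [Multiset.map_cons, Multiset.prod_cons] at hne ⊢
    rw [derivative_mul]
    simp only [derivative_sub, derivative_X, derivative_C, sub_zero, one_mul,
      eval_add, eval_mul, eval_sub, eval_X, eval_C] at hne ⊢
    set B := eval z (t.map fun r => X - C r).prod with hBdef
    set B' := eval z (derivative (t.map fun r => X - C r).prod) with hB'def
    have hA : z - r ≠ 0 := fun h => hne (by rw [h, zero_mul])
    have hB : B ≠ 0 := fun h => hne (by rw [h, mul_zero])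
    have key : z * (B + (z - r) * B') / ((z - r) * B) = z / (z - r) + z * B' / B := by
      field_simp
    rw [key, Complex.add_re]
    have h1 := re_div_le_half z r hz hr hA
    have h2 := ih ht hB
    rw [Multiset.card_cons]
    push_cast
    push_cast at h2
    linarith

lemma lemA (n : ℕ) (F : Polynomial ℂ) (hdeg : F.natDegree = n)
    (hz0 : ∀ w : ℂ, ‖w‖ < 1 → eval w F ≠ 0) (z : ℂ) (hz : ‖z‖ = 1) :
    ‖eval z (derivative F)‖ ≤
      ‖(n : ℂ) * eval z F - z * eval z (derivative F)‖ := by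
  by_cases hFz : eval z F = 0
  · rw [hFz, mul_zero, zero_sub, norm_neg, norm_mul, hz, one_mul]
  · -- factor F
    have hF0 : F ≠ 0 := fun h => hFz (by simp [h])
    have hcard : Multiset.card F.roots = F.natDegree :=
      (splits_iff_card_roots).mp (IsAlgClosed.splits F)
    have hfac := C_leadingCoeff_mul_prod_multiset_X_sub_C hcard
    have hroots : ∀ r ∈ F.roots, 1 ≤ ‖r‖ := by
      intro r hr
      by_contra h
      exact hz0 r (lt_of_not_ge h) ((mem_roots hF0).mp hr)
    set c := F.leadingCoeff with hc
    set Q := (F.roots.map fun r => X - C r).prod with hQ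
    have hc0 : c ≠ 0 := leadingCoeff_ne_zero.mpr hF0
    have hQz : eval z Q ≠ 0 := by
      intro h
      apply hFz
      rw [← hfac, eval_mul, h, mul_zero]
    have hre : (z * eval z (derivative F) / eval z F).re ≤ (n : ℝ) / 2 := by
      have : z * eval z (derivative F) / eval z F = z * eval z (derivative Q) / eval z Q := by
        conv_lhs => rw [← hfac]
        rw [derivative_mul, derivative_C, zero_mul, zero_add, eval_mul, eval_mul, eval_C]
        field_simp
      rw [this]
      have := re_logderiv_prod z hz F.roots hroots hQz
      rwa [hcard, hdeg] at this
    -- now the normSq computation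
    set a := eval z F with ha
    set b := z * eval z (derivative F) with hb
    have habs : ‖eval z (derivative F)‖ = ‖b‖ := by
      rw [hb, norm_mul, hz, one_mul]
    rw [habs]
    rw [Complex.norm_def, Complex.norm_def]
    apply Real.sqrt_le_sqrt
    have hconj : b * (starRingEnd ℂ) a = (b / a) * ((Complex.normSq a : ℝ) : ℂ) := by
      rw [← Complex.mul_conj]
      field_simp
    have hre2 : (b * (starRingEnd ℂ) a).re ≤ (n : ℝ) / 2 * Complex.normSq a := by
      rw [hconj, mul_comm, Complex.re_ofReal_mul]
      have := Complex.normSq_nonneg a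
      nlinarith [hre]
    have hexp := Complex.normSq_sub ((n : ℂ) * a) b
    have h1 : Complex.normSq ((n : ℂ) * a) = (n : ℝ)^2 * Complex.normSq a := by
      rw [Complex.normSq_mul, ← Complex.ofReal_natCast, Complex.normSq_ofReal]
      ring
    have h2 : (((n : ℂ) * a) * (starRingEnd ℂ) b).re = (n : ℝ) * (a * (starRingEnd ℂ) b).re := by
      rw [mul_assoc, ← Complex.ofReal_natCast, Complex.re_ofReal_mul]
    have h3 : (a * (starRingEnd ℂ) b).re = (b * (starRingEnd ℂ) a).re := by
      rw [← Complex.conj_conj (a * (starRingEnd ℂ) b), map_mul, Complex.conj_conj]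
      simp [Complex.conj_re, mul_comm]
    nlinarith [hexp, hre2, Complex.normSq_nonneg a]

theorem stmt_4 (n : ℕ) (hn : 1 ≤ n) (P : Polynomial ℂ) (hdeg : P.natDegree = n)
    (hzero : ∀ z : ℂ, ‖z‖ < 1 → P.eval z ≠ 0) :
    maxSphere (derivative P) 1 ≤ (n / 2) * maxSphere P 1 := by
  classical
  set M := maxSphere P 1 with hM
  have hn0 : (0:ℝ) < n := by exact_mod_cast Nat.lt_of_lt_of_le Nat.zero_lt_one hn
  have hcont : Continuous fun z : ℂ => ‖eval z P‖ :=
    continuous_norm.comp (P.continuous)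
  have hbdd : BddAbove ((fun z => ‖eval z P‖) '' Metric.sphere (0:ℂ) 1) :=
    ((isCompact_sphere (0:ℂ) 1).image hcont).bddAbove
  have hub : ∀ w : ℂ, ‖w‖ = 1 → ‖eval w P‖ ≤ M := by
    intro w hw
    exact le_csSup hbdd ⟨w, by simpa [mem_sphere_zero_iff_norm] using hw, rfl⟩
  have hM0 : 0 ≤ M := le_trans (norm_nonneg _) (hub 1 (by simp))
  have hmax : ∀ w : ℂ, ‖w‖ ≤ 1 → ‖eval w P‖ ≤ M := by
    intro w hw
    have hd : DiffContOnCl ℂ (fun z => eval z P) (Metric.ball (0:ℂ) 1) :=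
      (P.differentiable).diffContOnCl
    have hfr : ∀ u ∈ frontier (Metric.ball (0:ℂ) 1), ‖eval u P‖ ≤ M := by
      intro u hu
      rw [frontier_ball (0:ℂ) one_ne_zero, mem_sphere_zero_iff_norm] at hu
      simpa using hub u hu
    have hcl : w ∈ closure (Metric.ball (0:ℂ) 1) := by
      rw [closure_ball (0:ℂ) one_ne_zero, Metric.mem_closedBall, dist_zero_right]
      exact hw
    simpa using
      Complex.norm_le_of_forall_mem_frontier_norm_le Metric.isBounded_ball hd hfr hcl
  have key : ∀ z : ℂ, ‖z‖ = 1 →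
      ‖eval z (derivative P)‖ ≤ ((n:ℝ) / 2) * M := by
    intro z hz
    set a := eval z P with ha
    set b := z * eval z (derivative P) with hb
    set G := (n:ℂ) * a - b with hG
    set g := ‖G‖ with hg
    set p := ‖eval z (derivative P)‖ with hp
    have hp0 : 0 ≤ p := norm_nonneg _
    have hg0' : 0 ≤ g := norm_nonneg _
    have h1 : p ≤ g := lemA n P hdeg hzero z hz
    have h2 : ∀ t : ℝ, M < t → p ≤ |g - n * t| := by
      intro t ht
      have htpos : 0 < t := lt_of_le_of_lt hM0 ht
      by_cases hGz : G = 0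
      · have hgz : g = 0 := by rw [hg, hGz, norm_zero]
        calc p ≤ 0 := hgz ▸ h1
          _ ≤ |g - n * t| := abs_nonneg _
      · have hgpos : 0 < g := norm_pos_iff.mpr hGz
        set lam : ℂ := ((t / g : ℝ) : ℂ) * G with hlam
        have hlamabs : ‖lam‖ = t := by
          rw [hlam, norm_mul, Complex.norm_real, Real.norm_eq_abs, abs_of_pos (div_pos htpos hgpos), ← hg,
            div_mul_cancel₀ _ (ne_of_gt hgpos)]
        set F := P - C lam with hF
        have hdegF : F.natDegree = n := by rw [hF, natDegree_sub_C, hdeg]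
        have hz0F : ∀ w : ℂ, ‖w‖ < 1 → eval w F ≠ 0 := by
          intro w hw hcontra
          rw [hF, eval_sub, eval_C, sub_eq_zero] at hcontra
          have h4 : ‖eval w P‖ ≤ M := hmax w (le_of_lt hw)
          rw [hcontra, hlamabs] at h4
          linarith
        have h5 := lemA n F hdegF hz0F z hz
        have hdF : derivative F = derivative P := by rw [hF]; simp
        have heF : eval z F = a - lam := by rw [hF]; simp [ha]
        rw [hdF, heF] at h5
        have hrw : (n:ℂ) * (a - lam) - b = (1 - ((n * t / g : ℝ) : ℂ)) * G := by
          rw [hlam, hG]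
          push_cast
          have : (g:ℂ) ≠ 0 := by exact_mod_cast ne_of_gt hgpos
          field_simp
          ring
        rw [hrw, norm_mul] at h5
        have habs1 : ‖1 - ((n*t/g : ℝ):ℂ)‖ = |1 - n*t/g| := by
          rw [← Complex.ofReal_one, ← Complex.ofReal_sub, Complex.norm_real, Real.norm_eq_abs]
        rw [habs1, ← hg] at h5
        calc p ≤ |1 - n*t/g| * g := h5
          _ = |g - n*t| := by
            have hgg : (1 - (n:ℝ)*t/g)*g = g - n*t := by field_simp
            rw [← hgg, abs_mul, abs_of_pos hgpos]
    rcases le_or_gt g ((n:ℝ) * M) with hcase | hcase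
    · have hsum : p + g ≤ (n:ℝ) * M := by
        by_contra hcon
        push_neg at hcon
        have hMlt : M < (p+g)/n := by rw [lt_div_iff₀ hn0]; nlinarith
        set t := (M + (p+g)/(n:ℝ))/2 with htdef
        have ht1 : M < t := by rw [htdef]; linarith
        have ht2 : (n:ℝ) * t < p + g := by
          rw [htdef]
          have : (p+g)/(n:ℝ) * n = p + g := div_mul_cancel₀ _ (ne_of_gt hn0)
          nlinarith
        have h3 := h2 t ht1
        have hgt : g < (n:ℝ) * t := by nlinarith
        rw [abs_of_neg (by linarith)] at h3
        linarith
      linarith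
    · have ht : M < g / n := by rw [lt_div_iff₀ hn0]; nlinarith
      have h3 := h2 (g/n) ht
      have hcancel : (n:ℝ) * (g/n) = g := by field_simp
      rw [hcancel, sub_self, abs_zero] at h3
      have : p = 0 := le_antisymm h3 hp0
      rw [this]
      positivity
  apply Real.sSup_le
  · rintro x ⟨w, hw, rfl⟩
    rw [mem_sphere_zero_iff_norm] at hw
    exact key w hw
  · have : (0:ℝ) ≤ (n:ℝ)/2 := by positivity
    exact mul_nonneg this hM0
end

section
/- If P(z) is a polynomial of degree n and Q(z) = z^n · conj(P(1/conj(z))), then for all z with |z| = 1, |P'(z)| + |Q'(z)| ≤ n · max_{|z|=1}|P(z)|. -/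
open Polynomial

/-! ### Auxiliary material -/

noncomputable def recipPoly (n : ℕ) (F : Polynomial ℂ) : Polynomial ℂ :=
  ∑ j ∈ Finset.range (n+1), Polynomial.C ((starRingEnd ℂ) (F.coeff (n - j))) * Polynomial.X ^ j

lemma recip_coeff (n : ℕ) (F : Polynomial ℂ) {j : ℕ} (hj : j ≤ n) :
    (recipPoly n F).coeff j = (starRingEnd ℂ) (F.coeff (n - j)) := by
  classical
  simp only [recipPoly, finset_sum_coeff, coeff_C_mul, coeff_X_pow]
  rw [Finset.sum_eq_single j]
  · simp
  · intro b _ hb; simp [Ne.symm hb]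
  · intro h; exact absurd (Finset.mem_range.2 (Nat.lt_succ_of_le hj)) h

lemma recip_coeff_gt (n : ℕ) (F : Polynomial ℂ) {j : ℕ} (hj : n < j) :
    (recipPoly n F).coeff j = 0 := by
  classical
  simp only [recipPoly, finset_sum_coeff, coeff_C_mul, coeff_X_pow]
  apply Finset.sum_eq_zero
  intro b hb
  have hbj : j ≠ b := by have := Finset.mem_range.1 hb; omega
  simp [hbj]

lemma recip_natDegree_le (n : ℕ) (F : Polynomial ℂ) : (recipPoly n F).natDegree ≤ n :=
  natDegree_le_iff_coeff_eq_zero.2 fun _ h => recip_coeff_gt n F h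

lemma recip_eval {n : ℕ} {F : Polynomial ℂ} (hF : F.natDegree ≤ n) {z : ℂ} (hz : z ≠ 0) :
    (recipPoly n F).eval z = z ^ n * (starRingEnd ℂ) (F.eval (1 / (starRingEnd ℂ) z)) := by
  have hev : F.eval (1 / (starRingEnd ℂ) z)
      = ∑ k ∈ Finset.range (n+1), F.coeff k * (1 / (starRingEnd ℂ) z) ^ k :=
    eval_eq_sum_range' (Nat.lt_succ_of_le hF) _
  rw [hev, map_sum, Finset.mul_sum]
  have LHS : (recipPoly n F).eval z
      = ∑ j ∈ Finset.range (n+1), (starRingEnd ℂ) (F.coeff (n - j)) * z ^ j := by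
    simp [recipPoly, eval_finset_sum]
  rw [LHS, ← Finset.sum_range_reflect]
  apply Finset.sum_congr rfl
  intro k hk
  have hk' : k ≤ n := by have := Finset.mem_range.1 hk; omega
  have h1 : n + 1 - 1 - k = n - k := by omega
  have h2 : n - (n - k) = k := by omega
  rw [h1, h2]
  have hconj : (starRingEnd ℂ) (F.coeff k * (1 / (starRingEnd ℂ) z) ^ k)
      = (starRingEnd ℂ) (F.coeff k) * (1 / z) ^ k := by
    rw [map_mul, map_pow, map_div₀, map_one, Complex.conj_conj]
  rw [hconj]
  have hpow : z ^ (n - k) = z ^ n * (1 / z) ^ k := by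
    rw [one_div, inv_pow, pow_sub₀ z hz hk']
  rw [hpow]; ring

lemma recip_sub (n : ℕ) (F G : Polynomial ℂ) :
    recipPoly n (F - G) = recipPoly n F - recipPoly n G := by
  simp only [recipPoly, coeff_sub, map_sub, sub_mul, C_sub]
  rw [Finset.sum_sub_distrib]

lemma recip_C (n : ℕ) (a : ℂ) :
    recipPoly n (Polynomial.C a) = Polynomial.C ((starRingEnd ℂ) a) * Polynomial.X ^ n := by
  classical
  rw [recipPoly, Finset.sum_eq_single_of_mem n (Finset.self_mem_range_succ n)]
  · simp
  · intro b hb hbn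
    have hb' : b < n + 1 := Finset.mem_range.1 hb
    have : n - b ≠ 0 := by omega
    simp [coeff_C, this]

lemma recip_recip {n : ℕ} {F : Polynomial ℂ} (hF : F.natDegree ≤ n) :
    recipPoly n (recipPoly n F) = F := by
  ext j
  rcases le_or_gt j n with hj | hj
  · rw [recip_coeff n _ hj, recip_coeff n F (Nat.sub_le n j)]
    have : n - (n - j) = j := by omega
    rw [this, Complex.conj_conj]
  · rw [recip_coeff_gt n _ hj, coeff_eq_zero_of_natDegree_lt (lt_of_le_of_lt hF hj)]

lemma recip_unique {n : ℕ} {F G : Polynomial ℂ} (hF : F.natDegree ≤ n)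
    (hG : ∀ z : ℂ, z ≠ 0 → G.eval z = z ^ n * (starRingEnd ℂ) (F.eval (1 / (starRingEnd ℂ) z))) :
    G = recipPoly n F := by
  apply Polynomial.eq_of_infinite_eval_eq
  have hsub : {x : ℂ | x ≠ 0} ⊆ {x : ℂ | G.eval x = (recipPoly n F).eval x} := by
    intro x hx
    have := hG x hx
    simp only [Set.mem_setOf_eq]
    rw [this, recip_eval hF hx]
  apply Set.Infinite.mono hsub
  have h := (Set.finite_singleton (0:ℂ)).infinite_compl
  rwa [show (({0} : Set ℂ)ᶜ) = {x : ℂ | x ≠ 0} by ext x; simp] at h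

lemma sphereSet_infinite : {w : ℂ | ‖w‖ = 1}.Infinite := by
  apply Set.infinite_of_injective_forall_mem
    (f := fun k : ℕ => Complex.exp ((((k:ℝ)+1)⁻¹ : ℝ) * Complex.I))
  · intro k l hkl
    simp only at hkl
    rw [Complex.exp_eq_exp_iff_exists_int] at hkl
    obtain ⟨m, hm⟩ := hkl
    set a : ℝ := ((k:ℝ)+1)⁻¹
    set b : ℝ := ((l:ℝ)+1)⁻¹
    have hm' : (a : ℂ) * Complex.I = (b : ℂ) * Complex.I + (m : ℂ) * (2 * (Real.pi:ℂ) * Complex.I) := hm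
    have hab : (a : ℂ) = (b : ℂ) + (m : ℂ) * (2 * (Real.pi:ℂ)) := by
      have hI : (Complex.I : ℂ) ≠ 0 := Complex.I_ne_zero
      field_simp at hm' ⊢
      have : ((a : ℂ) - (b : ℂ) - (m : ℂ) * (2 * (Real.pi:ℂ))) * Complex.I = 0 := by
        ring_nf
        ring_nf at hm'
        linear_combination Complex.I * hm'
      rcases mul_eq_zero.1 this with h | h
      · linear_combination h
      · exact absurd h hI
    have habR : a = b + (m : ℝ) * (2 * Real.pi) := by
      exact_mod_cast hab
    have ha0 : 0 < a := by positivity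
    have ha1 : a ≤ 1 := by
      rw [inv_le_one_iff₀]; right; linarith [Nat.cast_nonneg (α := ℝ) k]
    have hb0 : 0 < b := by positivity
    have hb1 : b ≤ 1 := by
      rw [inv_le_one_iff₀]; right; linarith [Nat.cast_nonneg (α := ℝ) l]
    have hm0 : m = 0 := by
      by_contra hm0
      have h1 : (1:ℝ) ≤ |(m:ℝ)| := by
        have : (1:ℤ) ≤ |m| := Int.one_le_abs hm0
        exact_mod_cast this
      have hpi : (3:ℝ) < Real.pi := Real.pi_gt_three
      have : |a - b| < 1 := by
        rw [abs_lt]; constructor <;> linarith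
      have h2 : |a - b| = |(m:ℝ)| * (2 * Real.pi) := by
        rw [habR]; rw [show b + (m:ℝ)*(2*Real.pi) - b = (m:ℝ)*(2*Real.pi) by ring]
        rw [abs_mul]; congr 1
        rw [abs_of_pos]; positivity
      nlinarith
    rw [hm0] at habR
    simp only [Int.cast_zero, zero_mul, add_zero] at habR
    have : ((k:ℝ)+1) = ((l:ℝ)+1) := by
      have := inv_injective (habR : a = b)
      exact this
    exact_mod_cast Nat.cast_injective (by linarith : (k:ℝ) = (l:ℝ))
  · intro k
    simp only [Set.mem_setOf_eq]
    exact Complex.norm_exp_ofReal_mul_I _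

lemma poly_maxmod (F : Polynomial ℂ) {M : ℝ}
    (hb : ∀ w : ℂ, ‖w‖ = 1 → ‖F.eval w‖ ≤ M) :
    ∀ w : ℂ, ‖w‖ ≤ 1 → ‖F.eval w‖ ≤ M := by
  intro w hw
  have h := Complex.norm_le_of_forall_mem_frontier_norm_le (U := Metric.ball (0:ℂ) 1)
    Metric.isBounded_ball (F.differentiable.diffContOnCl) (C := M) ?_ (z := w) ?_
  · simpa using h
  · intro x hx
    rw [frontier_ball (0:ℂ) one_ne_zero] at hx
    have hx1 : ‖x‖ = 1 := by simpa using mem_sphere_zero_iff_norm.1 hx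
    simpa using hb x hx1
  · rw [closure_ball (0:ℂ) one_ne_zero]
    simpa using hw

lemma div_maxmod (F G : Polynomial ℂ)
    (hF : ∀ w : ℂ, ‖w‖ ≤ 1 → F.eval w ≠ 0)
    (hb : ∀ w : ℂ, ‖w‖ = 1 → ‖G.eval w‖ ≤ ‖F.eval w‖) :
    ∀ w : ℂ, ‖w‖ ≤ 1 → ‖G.eval w‖ ≤ ‖F.eval w‖ := by
  intro w hw
  have hFw : F.eval w ≠ 0 := hF w hw
  have hd : DiffContOnCl ℂ (fun x : ℂ => G.eval x / F.eval x) (Metric.ball (0:ℂ) 1) := by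
    constructor
    · apply DifferentiableOn.div
      · exact (G.differentiable).differentiableOn
      · exact (F.differentiable).differentiableOn
      · intro x hx
        exact hF x (le_of_lt (by simpa using mem_ball_zero_iff.1 hx))
    · rw [closure_ball (0:ℂ) one_ne_zero]
      apply ContinuousOn.div
      · exact (G.continuous).continuousOn
      · exact (F.continuous).continuousOn
      · intro x hx
        exact hF x (by simpa using mem_closedBall_zero_iff.1 hx)
  have h := Complex.norm_le_of_forall_mem_frontier_norm_le (U := Metric.ball (0:ℂ) 1)
    Metric.isBounded_ball hd (C := 1) ?_ (z := w) ?_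
  · have h' : ‖G.eval w / F.eval w‖ ≤ 1 := by simpa using h
    rw [norm_div] at h'
    exact (div_le_one (norm_pos_iff.2 hFw)).1 h'
  · intro x hx
    rw [frontier_ball (0:ℂ) one_ne_zero] at hx
    have hx1 : ‖x‖ = 1 := by simpa using mem_sphere_zero_iff_norm.1 hx
    have hFx : F.eval x ≠ 0 := hF x (le_of_eq hx1)
    have : ‖G.eval x / F.eval x‖ ≤ 1 := by
      rw [norm_div]
      exact (div_le_one (norm_pos_iff.2 hFx)).2 (hb x hx1)
    simpa using this
  · rw [closure_ball (0:ℂ) one_ne_zero]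
    simpa using hw

lemma multiset_eval_sum (z : ℂ) (s : Multiset (Polynomial ℂ)) :
    Polynomial.eval z s.sum = (s.map (Polynomial.eval z)).sum := by
  induction s using Multiset.induction with
  | empty => simp
  | cons a s ih => simp [ih]

lemma multiset_cast_sum (s : Multiset ℝ) :
    ((s.sum : ℝ) : ℂ) = (s.map (fun x : ℝ => (x : ℂ))).sum := by
  induction s using Multiset.induction with
  | empty => simp
  | cons a s ih => simp [ih]

lemma multiset_sum_map_sub {s : Multiset ℂ} (f g : ℂ → ℂ) :
    (s.map fun i => f i - g i).sum = (s.map f).sum - (s.map g).sum := by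
  induction s using Multiset.induction with
  | empty => simp
  | cons a s ih => simp [ih]; ring

lemma gauss_lucas (S : Polynomial ℂ) (hS : 1 ≤ S.natDegree)
    (hroots : ∀ w : ℂ, S.eval w = 0 → ‖w‖ < 1)
    {z : ℂ} (hz : 1 ≤ ‖z‖) : (derivative S).eval z ≠ 0 := by
  classical
  have hS0 : S ≠ 0 := fun h => by simp [h] at hS
  have hlc : S.leadingCoeff ≠ 0 := leadingCoeff_ne_zero.2 hS0
  set R := S.roots with hR
  have hcard : R.card = S.natDegree := by
    have h := (IsAlgClosed.splits S).natDegree_eq_card_roots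
    exact h.symm
  have hfact : S = C S.leadingCoeff * (R.map fun a => X - C a).prod :=
    (IsAlgClosed.splits S).eq_prod_roots
  have hmem : ∀ r ∈ R, ‖r‖ < 1 := fun r hr => hroots r ((mem_roots'.1 hr).2)
  have hzr : ∀ r ∈ R, z - r ≠ 0 := by
    intro r hr h
    have : z = r := by linear_combination h
    rw [this] at hz
    exact absurd (hmem r hr) (not_lt.2 hz)
  set Pz : ℂ := (R.map fun a => z - a).prod with hPzdef
  have hPz0 : Pz ≠ 0 := by
    apply Multiset.prod_ne_zero
    intro h0
    obtain ⟨r, hr, hr0⟩ := Multiset.mem_map.1 h0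
    exact hzr r hr hr0
  have hevalS : S.eval z = S.leadingCoeff * Pz := by
    conv_lhs => rw [hfact]
    rw [eval_mul, eval_C, eval_multiset_prod, Multiset.map_map]
    simp [Function.comp_def, hPzdef]
  intro h0
  -- derivative computation
  have hdp : (derivative S).eval z
      = S.leadingCoeff * (R.map fun i => (((R.erase i).map fun a => z - a)).prod).sum := by
    conv_lhs => rw [hfact]
    rw [derivative_C_mul, eval_mul, eval_C]
    congr 1
    rw [derivative_prod]
    rw [show ((Multiset.map (fun i => (Multiset.map (fun a => X - C a) (R.erase i)).prod
        * derivative (X - C i)) R)) = (Multiset.map (fun i =>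
        (Multiset.map (fun a => X - C a) (R.erase i)).prod) R) by
      apply Multiset.map_congr rfl
      intro r _
      simp]
    rw [multiset_eval_sum, Multiset.map_map]
    apply congrArg Multiset.sum
    apply Multiset.map_congr rfl
    intro r _
    simp only [Function.comp_apply]
    rw [eval_multiset_prod, Multiset.map_map]
    apply congrArg Multiset.prod
    apply Multiset.map_congr rfl
    intro a _
    simp
  -- reduce to vanishing of sum of reciprocals
  have hterm : ∀ r ∈ R, ((R.erase r).map fun a => z - a).prod = (z - r)⁻¹ * Pz := by
    intro r hr
    have hP : Pz = (z - r) * ((R.erase r).map fun a => z - a).prod := by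
      conv_lhs => rw [hPzdef, ← Multiset.cons_erase hr]
      rw [Multiset.map_cons, Multiset.prod_cons]
    rw [hP, ← mul_assoc, inv_mul_cancel₀ (hzr r hr), one_mul]
  have hval : (R.map fun r => (z - r)⁻¹).sum = 0 := by
    have h1 : (R.map fun i => (((R.erase i).map fun a => z - a)).prod).sum
        = (R.map fun r => (z - r)⁻¹).sum * Pz := by
      rw [← Multiset.sum_map_mul_right]
      apply congrArg Multiset.sum
      exact Multiset.map_congr rfl hterm
    rw [hdp, h1] at h0
    rcases mul_eq_zero.1 h0 with h | h
    · exact absurd h hlc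
    · rcases mul_eq_zero.1 h with h' | h'
      · exact h'
      · exact absurd h' hPz0
  -- conjugate and rewrite with normSq weights
  have hconj : (R.map fun r => ((starRingEnd ℂ) (z - r))⁻¹).sum = 0 := by
    have := congrArg (starRingEnd ℂ) hval
    rw [map_multiset_sum, Multiset.map_map, map_zero] at this
    rw [← this]
    apply congrArg Multiset.sum
    apply Multiset.map_congr rfl
    intro r _
    simp [map_inv₀]
  have hinv : ∀ w : ℂ, w ≠ 0 → ((starRingEnd ℂ) w)⁻¹ = w * (((Complex.normSq w : ℝ) : ℂ))⁻¹ := by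
    intro w hw
    have h1 : ((Complex.normSq w : ℝ) : ℂ) = w * (starRingEnd ℂ) w := (Complex.mul_conj w).symm
    rw [h1, mul_inv, ← mul_assoc, mul_inv_cancel₀ hw, one_mul]
  have hsum : (R.map fun r => (z - r) * (((Complex.normSq (z - r) : ℝ) : ℂ))⁻¹).sum = 0 := by
    rw [← hconj]
    apply congrArg Multiset.sum
    apply Multiset.map_congr rfl
    intro r hr
    rw [hinv (z - r) (hzr r hr)]
  set t : ℂ → ℝ := fun r => (Complex.normSq (z - r))⁻¹ with ht
  have htpos : ∀ r ∈ R, 0 < t r := by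
    intro r hr
    exact inv_pos.2 (Complex.normSq_pos.2 (hzr r hr))
  set T : ℝ := (R.map t).sum with hT
  have hRne : R ≠ 0 := by
    intro h
    rw [h] at hcard
    simp at hcard
    omega
  have hTpos : 0 < T := by
    have h := Multiset.sum_lt_sum_of_nonempty (f := fun _ : ℂ => (0:ℝ)) (g := t) hRne htpos
    simpa using h
  -- split the sum
  have hzT : z * ((T : ℝ) : ℂ) = (R.map fun r => r * (((t r : ℝ)) : ℂ)).sum := by
    have hsplit : (R.map fun r => (z - r) * (((Complex.normSq (z - r) : ℝ) : ℂ))⁻¹).sum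
        = (R.map fun r => z * ((t r : ℝ) : ℂ)).sum - (R.map fun r => r * ((t r : ℝ) : ℂ)).sum := by
      rw [← multiset_sum_map_sub]
      apply congrArg Multiset.sum
      apply Multiset.map_congr rfl
      intro r _
      push_cast [ht]
      ring
    rw [hsplit] at hsum
    have hzmul : (R.map fun r => z * ((t r : ℝ) : ℂ)).sum = z * ((T : ℝ) : ℂ) := by
      rw [Multiset.sum_map_mul_left]
      congr 1
      rw [hT]
      rw [multiset_cast_sum, Multiset.map_map]
      rfl
    rw [hzmul] at hsum
    linear_combination hsum
  have habs : ‖z‖ * T < T := by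
    have h1 : ‖z * ((T : ℝ) : ℂ)‖ = ‖z‖ * T := by
      rw [norm_mul, Complex.norm_real, Real.norm_eq_abs, abs_of_pos hTpos]
    have h2 : ‖(R.map fun r => r * (((t r : ℝ)) : ℂ)).sum‖
        ≤ (R.map fun r => ‖r‖ * t r).sum := by
      refine le_trans (norm_multiset_sum_le _) ?_
      rw [Multiset.map_map]
      apply le_of_eq
      apply congrArg Multiset.sum
      apply Multiset.map_congr rfl
      intro r hr
      simp only [Function.comp_apply]
      rw [norm_mul, Complex.norm_real, Real.norm_eq_abs, abs_of_pos (htpos r hr)]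
    have h3 : (R.map fun r => ‖r‖ * t r).sum < (R.map t).sum := by
      apply Multiset.sum_lt_sum_of_nonempty hRne
      intro r hr
      have := hmem r hr
      have := htpos r hr
      nlinarith
    rw [← h1, hzT]
    exact lt_of_le_of_lt h2 h3
  nlinarith


lemma keyA {n : ℕ} (hn : 1 ≤ n) (F : Polynomial ℂ) (hFdeg : F.natDegree ≤ n)
    (hF0 : ∀ w : ℂ, ‖w‖ ≤ 1 → F.eval w ≠ 0)
    {μ : ℂ} (hμ : 1 < ‖μ‖) {z : ℂ} (hz : ‖z‖ = 1) :
    (derivative F).eval z ≠ (starRingEnd ℂ) μ * (derivative (recipPoly n F)).eval z := by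
  set G := recipPoly n F with hGdef
  have hconj_inv : ∀ w : ℂ, ‖w‖ = 1 → (starRingEnd ℂ) w = w⁻¹ := by
    intro w hw
    have h1 : w * (starRingEnd ℂ) w = 1 := by
      rw [Complex.mul_conj]
      norm_cast
      rw [Complex.normSq_eq_norm_sq, hw]; norm_num
    exact eq_inv_of_mul_eq_one_right ((mul_comm w _) ▸ h1)
  have habs_eq : ∀ w : ℂ, ‖w‖ = 1 → ‖G.eval w‖ = ‖F.eval w‖ := by
    intro w hw
    have hw0 : w ≠ 0 := by intro h; rw [h] at hw; simp at hw
    rw [hGdef, recip_eval hFdeg hw0, norm_mul, norm_pow, hw, one_pow, one_mul, Complex.norm_conj]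
    congr 2
    rw [one_div, hconj_inv w hw, inv_inv]
  have hGF : ∀ w : ℂ, ‖w‖ ≤ 1 → ‖G.eval w‖ ≤ ‖F.eval w‖ :=
    div_maxmod F G hF0 (fun w hw => le_of_eq (habs_eq w hw))
  set T : Polynomial ℂ := G - Polynomial.C μ * F with hTdef
  have hT : ∀ w : ℂ, ‖w‖ ≤ 1 → T.eval w ≠ 0 := by
    intro w hw h
    rw [hTdef, eval_sub, eval_mul, eval_C, sub_eq_zero] at h
    have h1 := hGF w hw
    have h2 : ‖G.eval w‖ = ‖μ‖ * ‖F.eval w‖ := by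
      rw [h, norm_mul]
    have h3 : 0 < ‖F.eval w‖ := norm_pos_iff.2 (hF0 w hw)
    nlinarith
  set S : Polynomial ℂ := F - Polynomial.C ((starRingEnd ℂ) μ) * G with hSdef
  have hSeval : ∀ w : ℂ, 1 ≤ ‖w‖ → S.eval w ≠ 0 := by
    intro w hw
    have hw0 : w ≠ 0 := by
      intro h; rw [h] at hw; simp at hw; linarith
    set v : ℂ := ((starRingEnd ℂ) w)⁻¹ with hvdef
    have hv0 : v ≠ 0 := by
      apply inv_ne_zero
      simpa using hw0
    have hvabs : ‖v‖ ≤ 1 := by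
      rw [hvdef, norm_inv, Complex.norm_conj]
      rw [inv_le_one_iff₀]; right; exact hw
    have e1 : G.eval w = w ^ n * (starRingEnd ℂ) (F.eval v) := by
      rw [hGdef, recip_eval hFdeg hw0, one_div]
    have e2 : F.eval w = w ^ n * (starRingEnd ℂ) (G.eval v) := by
      have hGv : G.eval v = v ^ n * (starRingEnd ℂ) (F.eval (1 / (starRingEnd ℂ) v)) :=
        hGdef ▸ recip_eval hFdeg hv0
      have hvv : 1 / (starRingEnd ℂ) v = w := by
        rw [hvdef, map_inv₀, Complex.conj_conj, one_div, inv_inv]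
      rw [hvv] at hGv
      rw [hGv, map_mul, Complex.conj_conj, map_pow, ← mul_assoc]
      rw [hvdef, map_inv₀, Complex.conj_conj]
      rw [← mul_pow, mul_inv_cancel₀ hw0, one_pow, one_mul]
    intro hS0
    have hTv : T.eval v ≠ 0 := hT v hvabs
    apply hTv
    have hSw : S.eval w = w ^ n * (starRingEnd ℂ) (T.eval v) := by
      rw [hSdef, hTdef, eval_sub, eval_mul, eval_C, eval_sub, eval_mul, eval_C,
        map_sub, map_mul, mul_sub, ← e2]
      congr 1
      rw [← mul_assoc, mul_comm (w ^ n) ((starRingEnd ℂ) μ), mul_assoc, ← e1]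
    rw [hSw] at hS0
    rcases mul_eq_zero.1 hS0 with h | h
    · exact absurd h (pow_ne_zero _ hw0)
    · have := congrArg (starRingEnd ℂ) h
      rwa [Complex.conj_conj, map_zero] at this
  have hF00 : F.eval 0 ≠ 0 := hF0 0 (by simp)
  have hScoeff : S.coeff n ≠ 0 := by
    have hGn : G.coeff n = (starRingEnd ℂ) (F.coeff 0) := by
      rw [hGdef, recip_coeff n F (le_refl n), Nat.sub_self]
    have hG0 : G.coeff 0 = (starRingEnd ℂ) (F.coeff n) := by
      rw [hGdef, recip_coeff n F (Nat.zero_le n), Nat.sub_zero]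
    have hFn : F.coeff n = (starRingEnd ℂ) (G.coeff 0) := by
      rw [hG0, Complex.conj_conj]
    have habs1 : ‖F.coeff n‖ ≤ ‖F.coeff 0‖ := by
      rw [hFn, Complex.norm_conj, coeff_zero_eq_eval_zero, coeff_zero_eq_eval_zero]
      exact hGF 0 (by simp)
    rw [hSdef, coeff_sub, coeff_C_mul, hGn]
    intro h
    rw [sub_eq_zero] at h
    have h2 : ‖F.coeff n‖
        = ‖μ‖ * ‖F.coeff 0‖ := by
      rw [h, norm_mul, Complex.norm_conj, Complex.norm_conj]
    have h3 : 0 < ‖F.coeff 0‖ := by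
      rw [coeff_zero_eq_eval_zero]; exact norm_pos_iff.2 hF00
    rw [coeff_zero_eq_eval_zero] at h2 h3 habs1
    nlinarith
  have hSdeg : 1 ≤ S.natDegree := le_trans hn (le_natDegree_of_ne_zero hScoeff)
  have hroots : ∀ w : ℂ, S.eval w = 0 → ‖w‖ < 1 := by
    intro w hw
    by_contra h
    push_neg at h
    exact hSeval w h hw
  have hGL := gauss_lucas S hSdeg hroots (le_of_eq hz.symm)
  intro heq
  apply hGL
  rw [hSdef, derivative_sub, derivative_C_mul, eval_sub, eval_mul, eval_C, heq, sub_self]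

lemma keyB {n : ℕ} (hn : 1 ≤ n) (F : Polynomial ℂ) (hFdeg : F.natDegree ≤ n)
    (hF0 : ∀ w : ℂ, ‖w‖ ≤ 1 → F.eval w ≠ 0)
    {z : ℂ} (hz : ‖z‖ = 1)
    (hG : (derivative (recipPoly n F)).eval z ≠ 0) :
    ‖(derivative F).eval z‖ ≤ ‖(derivative (recipPoly n F)).eval z‖ := by
  by_contra h
  push_neg at h
  set a := (derivative F).eval z with ha
  set b := (derivative (recipPoly n F)).eval z with hb
  have hbpos : 0 < ‖b‖ := norm_pos_iff.2 hG
  have h1 : 1 < ‖(starRingEnd ℂ) (a / b)‖ := by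
    rw [Complex.norm_conj, norm_div]
    rw [lt_div_iff₀ hbpos, one_mul]
    exact h
  apply keyA hn F hFdeg hF0 h1 hz
  rw [Complex.conj_conj, div_mul_cancel₀ _ hG]

lemma arith_lemma {p q c : ℝ} (hp : 0 ≤ p) (hq : 0 ≤ q) (hc : 0 < c)
    (h1 : ∀ r : ℝ, 1 < r → q ≠ r * c → p ≤ |q - r * c|)
    (h2 : ∀ r : ℝ, 1 < r → p ≠ r * c → q ≤ |p - r * c|) :
    p + q ≤ c := by
  have main : ∀ x y : ℝ, 0 ≤ x → (∀ r : ℝ, 1 < r → y ≠ r * c → x ≤ |y - r * c|) → y ≤ c →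
      x + y ≤ c := by
    intro x y hx h hyc
    have hrc : ∀ r : ℝ, 1 < r → x + y ≤ r * c := by
      intro r hr
      have hyr : y < r * c := lt_of_le_of_lt hyc (by nlinarith)
      have h' := h r hr (ne_of_lt hyr)
      rw [abs_of_neg (by linarith)] at h'
      linarith
    by_contra hlt
    push_neg at hlt
    have hr1 : 1 < (x + y + c) / (2 * c) := by
      rw [lt_div_iff₀ (by linarith)]
      linarith
    have := hrc _ hr1
    have hcalc : (x + y + c) / (2 * c) * c = (x + y + c) / 2 := by
      field_simp
    rw [hcalc] at this
    linarith
  by_cases hqc : q ≤ c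
  · exact main p q hp h1 hqc
  · by_cases hpc : p ≤ c
    · have := main q p hq h2 hpc; linarith
    · push_neg at hqc hpc
      set r := (1 + min p q / c) / 2 with hr
      have hmin : c < min p q := lt_min hpc hqc
      have hr1 : 1 < r := by
        rw [hr]
        have : 1 < min p q / c := (one_lt_div hc).2 hmin
        linarith
      have hrc : r * c = (c + min p q) / 2 := by
        rw [hr]; field_simp
      have hrq : r * c < q := by
        rw [hrc]
        have : min p q ≤ q := min_le_right p q
        nlinarith
      have hrp : r * c < p := by
        rw [hrc]
        have : min p q ≤ p := min_le_left p q
        nlinarith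
      have e1 := h1 r hr1 (ne_of_gt hrq)
      have e2 := h2 r hr1 (ne_of_gt hrp)
      rw [abs_of_pos (by linarith)] at e1
      rw [abs_of_pos (by linarith)] at e2
      nlinarith

lemma step_lemma {n : ℕ} (hn : 1 ≤ n) {M : ℝ} (hMpos : 0 < M)
    (A : Polynomial ℂ) (hA : A.natDegree ≤ n)
    (hAin : ∀ w : ℂ, ‖w‖ ≤ 1 → ‖A.eval w‖ ≤ M)
    {z : ℂ} (hz : ‖z‖ = 1)
    {r : ℝ} (hr : 1 < r)
    (hne : ‖(derivative (recipPoly n A)).eval z‖ ≠ r * ((n:ℝ) * M)) :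
    ‖(derivative A).eval z‖
      ≤ |‖(derivative (recipPoly n A)).eval z‖ - r * ((n:ℝ) * M)| := by
  have hz0 : z ≠ 0 := by intro h; rw [h] at hz; simp at hz
  have hzn1 : ‖z ^ (n - 1)‖ = 1 := by rw [norm_pow, hz, one_pow]
  have hzn0 : z ^ (n - 1) ≠ 0 := pow_ne_zero _ hz0
  set b : ℂ := (derivative (recipPoly n A)).eval z with hbdef
  set qb : ℝ := ‖b‖ with hqb
  set u : ℂ := if b = 0 then 1 else b / ((qb : ℝ) : ℂ) with hudef
  have hu1 : ‖u‖ = 1 := by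
    rw [hudef]
    by_cases h : b = 0
    · simp [h]
    · have hqb0 : qb ≠ 0 := (norm_pos_iff.2 h).ne'
      rw [if_neg h, norm_div, Complex.norm_real, Real.norm_eq_abs, abs_of_pos (norm_pos_iff.2 h)]
      rw [div_self hqb0]
  have hu0 : u ≠ 0 := by
    intro h; rw [h] at hu1; simp at hu1
  have hbu : b = ((qb : ℝ) : ℂ) * u := by
    rw [hudef]
    by_cases h : b = 0
    · rw [if_pos h, h]
      have : qb = 0 := by rw [hqb, h, norm_zero]
      rw [this]; simp
    · have hqb0 : (((qb:ℝ)):ℂ) ≠ 0 := by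
        simp only [ne_eq, Complex.ofReal_eq_zero]
        exact (norm_pos_iff.2 h).ne'
      rw [if_neg h, mul_div_cancel₀ _ hqb0]
  -- choose lam
  have hnpos : 0 < (n:ℝ) := by exact_mod_cast lt_of_lt_of_le one_pos hn
  have hn0 : ((n:ℂ)) ≠ 0 := Nat.cast_ne_zero.2 (by omega)
  have hM0 : ((M:ℝ):ℂ) ≠ 0 := by exact_mod_cast hMpos.ne'
  set e : ℂ := ((M:ℝ):ℂ) * ((n:ℂ) * z ^ (n - 1)) with he
  have he0 : e ≠ 0 := mul_ne_zero hM0 (mul_ne_zero hn0 hzn0)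
  have habse : ‖e‖ = M * n := by
    rw [he, norm_mul, norm_mul, Complex.norm_real, Real.norm_eq_abs, hzn1, mul_one, abs_of_pos hMpos,
      Complex.norm_natCast]
  set lam : ℂ := (starRingEnd ℂ) (((r * ((n:ℝ) * M) : ℝ) : ℂ) * u / e) with hlamdef
  have hlam_abs : ‖lam‖ = r := by
    rw [hlamdef, Complex.norm_conj, norm_div, norm_mul, hu1, mul_one, Complex.norm_real, Real.norm_eq_abs, habse,
      abs_of_pos (by positivity)]
    field_simp
  have hlam_eq : (starRingEnd ℂ) (lam * (M:ℂ)) * ((n:ℂ) * z ^ (n - 1))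
      = ((r * ((n:ℝ) * M) : ℝ) : ℂ) * u := by
    rw [hlamdef, map_mul, Complex.conj_conj, Complex.conj_ofReal]
    field_simp
    rw [he]
    ring
  -- the shifted polynomial
  set F : Polynomial ℂ := A - Polynomial.C (lam * (M:ℂ)) with hFdef
  have hFdeg : F.natDegree ≤ n := by rw [hFdef, natDegree_sub_C]; exact hA
  have hF0 : ∀ w : ℂ, ‖w‖ ≤ 1 → F.eval w ≠ 0 := by
    intro w hw h
    rw [hFdef, eval_sub, eval_C, sub_eq_zero] at h
    have h1 := hAin w hw
    have h2 : ‖A.eval w‖ = r * M := by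
      rw [h, norm_mul, hlam_abs, Complex.norm_real, Real.norm_eq_abs, abs_of_pos hMpos]
    nlinarith
  have hrecip : recipPoly n F = recipPoly n A
      - Polynomial.C ((starRingEnd ℂ) (lam * (M:ℂ))) * Polynomial.X ^ n := by
    rw [hFdef, recip_sub, recip_C]
  have hder : (derivative (recipPoly n F)).eval z
      = ((qb - r * ((n:ℝ) * M) : ℝ) : ℂ) * u := by
    rw [hrecip, derivative_sub, derivative_C_mul, derivative_X_pow, eval_sub, eval_mul, eval_C,
      eval_mul, eval_C, eval_pow, eval_X, ← hbdef]
    rw [show (starRingEnd ℂ) (lam * (M:ℂ)) * ((n:ℂ) * z ^ (n - 1))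
        = ((r * ((n:ℝ) * M) : ℝ) : ℂ) * u from hlam_eq]
    rw [hbu]
    push_cast
    ring
  have hG'ne : (derivative (recipPoly n F)).eval z ≠ 0 := by
    rw [hder]
    apply mul_ne_zero _ hu0
    simp only [ne_eq, Complex.ofReal_eq_zero]
    exact sub_ne_zero.2 hne
  have hkb := keyB hn F hFdeg hF0 hz hG'ne
  have hderA : derivative F = derivative A := by
    rw [hFdef, derivative_sub, derivative_C, sub_zero]
  rw [hderA, hder] at hkb
  calc ‖(derivative A).eval z‖
      ≤ ‖((qb - r * ((n:ℝ) * M) : ℝ) : ℂ) * u‖ := hkb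
    _ = |qb - r * ((n:ℝ) * M)| := by
        rw [norm_mul, hu1, mul_one, Complex.norm_real, Real.norm_eq_abs]

theorem stmt_14 (n : ℕ) (hn : 1 ≤ n) (P Q : Polynomial ℂ) (hdeg : P.natDegree = n)
    (hQ : ∀ z : ℂ, z ≠ 0 →
      Q.eval z = z ^ n * (starRingEnd ℂ) (P.eval (1 / (starRingEnd ℂ) z))) :
    ∀ z : ℂ, ‖z‖ = 1 →
      ‖(derivative P).eval z‖ + ‖(derivative Q).eval z‖ ≤
        n * maxSphere P 1 := by
  intro z hz
  have hP0 : P ≠ 0 := by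
    intro h
    rw [h, natDegree_zero] at hdeg
    omega
  set M := maxSphere P 1 with hM
  have hbdd : BddAbove ((fun w => ‖P.eval w‖) '' Metric.sphere (0:ℂ) 1) :=
    (isCompact_sphere (0:ℂ) 1).bddAbove_image
      ((continuous_norm.comp P.continuous).continuousOn)
  have hMb : ∀ w : ℂ, ‖w‖ = 1 → ‖P.eval w‖ ≤ M := by
    intro w hw
    apply le_csSup hbdd
    exact ⟨w, mem_sphere_zero_iff_norm.2 (by simpa using hw), rfl⟩
  have hMpos : 0 < M := by
    obtain ⟨w, hw1, hwP⟩ : ∃ w : ℂ, ‖w‖ = 1 ∧ P.eval w ≠ 0 := by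
      by_contra hcon
      push_neg at hcon
      have hsub : {w : ℂ | ‖w‖ = 1} ⊆ {x : ℂ | P.IsRoot x} := by
        intro w hw
        exact hcon w hw
      exact (sphereSet_infinite.mono hsub) (Polynomial.finite_setOf_isRoot hP0)
    exact lt_of_lt_of_le (norm_pos_iff.2 hwP) (hMb w hw1)
  have hPdeg' : P.natDegree ≤ n := le_of_eq hdeg
  have hQeq : Q = recipPoly n P := recip_unique hPdeg' hQ
  have hdegQ : Q.natDegree ≤ n := hQeq ▸ recip_natDegree_le n P
  have hz0 : z ≠ 0 := by intro h; rw [h] at hz; simp at hz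
  have hconj_inv : ∀ w : ℂ, ‖w‖ = 1 → (starRingEnd ℂ) w = w⁻¹ := by
    intro w hw
    have h1 : w * (starRingEnd ℂ) w = 1 := by
      rw [Complex.mul_conj]
      norm_cast
      rw [Complex.normSq_eq_norm_sq, hw]; norm_num
    exact eq_inv_of_mul_eq_one_right ((mul_comm w _) ▸ h1)
  have hQb : ∀ w : ℂ, ‖w‖ = 1 → ‖Q.eval w‖ ≤ M := by
    intro w hw
    have hw0 : w ≠ 0 := by intro h; rw [h] at hw; simp at hw
    rw [hQ w hw0, norm_mul, norm_pow, hw, one_pow, one_mul, Complex.norm_conj]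
    rw [one_div, hconj_inv w hw, inv_inv]
    exact hMb w hw
  have hPin := poly_maxmod P hMb
  have hQin := poly_maxmod Q hQb
  set c : ℝ := (n : ℝ) * M with hc
  have hcpos : 0 < c := by
    apply mul_pos _ hMpos
    exact_mod_cast hn
  set p := ‖(derivative P).eval z‖ with hp
  set q := ‖(derivative Q).eval z‖ with hq
  have hzn1 : ‖z ^ (n - 1)‖ = 1 := by rw [norm_pow, hz, one_pow]
  have hzn0 : z ^ (n - 1) ≠ 0 := pow_ne_zero _ hz0
  -- generic chooser of λ
  have hQP : recipPoly n Q = P := by rw [hQeq, recip_recip hPdeg']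
  have key1 : ∀ r : ℝ, 1 < r → q ≠ r * c → p ≤ |q - r * c| := by
    intro r hr hne
    have h := step_lemma hn hMpos P hPdeg' hPin hz hr (by rw [← hQeq]; exact hne)
    rw [← hQeq] at h
    exact h
  have key2 : ∀ r : ℝ, 1 < r → p ≠ r * c → q ≤ |p - r * c| := by
    intro r hr hne
    have h := step_lemma hn hMpos Q hdegQ hQin hz hr (by rw [hQP]; exact hne)
    rw [hQP] at h
    exact h
  exact arith_lemma (norm_nonneg _) (norm_nonneg _) hcpos key1 key2
end

section
/- If P(z) = Σ_{v=0}^{n} c_v z^v is a polynomial of degree n having no zeros in |z| < k for some k ≥ 1, then for each point z on |z| = 1 with P(z) ≠ 0, Re(z P'(z)/P(z)) ≤ (1/(1+k))·[ n − (|c₀| − k^n|c_n|)/(|c₀| + k^n|c_n|) ]. -/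
open Polynomial

-- auxiliary lemmas

-- g(ab) ≤ g a + g b for a,b ≥ 1
lemma g_mul (a b : ℝ) (ha : 1 ≤ a) (hb : 1 ≤ b) :
    (a*b - 1)/(a*b + 1) ≤ (a - 1)/(a + 1) + (b - 1)/(b + 1) := by
  have h1 : (0:ℝ) < a + 1 := by linarith
  have h2 : (0:ℝ) < b + 1 := by linarith
  have h3 : (0:ℝ) < a*b + 1 := by nlinarith
  rw [div_add_div _ _ (ne_of_gt h1) (ne_of_gt h2), div_le_div_iff₀ h3 (by positivity)]
  nlinarith [mul_nonneg (mul_nonneg (sub_nonneg.2 ha) (sub_nonneg.2 hb)) (by nlinarith : (0:ℝ) ≤ a*b - 1)]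

lemma prod_ge (k : ℝ) (hk : 1 ≤ k) : ∀ (T : Multiset ℝ), (∀ t ∈ T, k ≤ t) →
    k ^ (Multiset.card T) ≤ T.prod := by
  intro T
  induction T using Multiset.induction with
  | empty => simp
  | cons a T ih =>
    intro h
    simp only [Multiset.prod_cons, Multiset.card_cons, pow_succ]
    have hka : k ≤ a := h a (Multiset.mem_cons_self a T)
    have := ih (fun t ht => h t (Multiset.mem_cons_of_mem ht))
    have hk0 : (0:ℝ) < k := by linarith
    calc k ^ Multiset.card T * k ≤ T.prod * a := by
          apply mul_le_mul this hka (le_of_lt hk0)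
          exact le_trans (by positivity) this
      _ = a * T.prod := mul_comm _ _

lemma key_sum (k : ℝ) (hk : 1 ≤ k) : ∀ (T : Multiset ℝ), (∀ t ∈ T, k ≤ t) →
    (T.map (fun t => 1/(1+t))).sum +
      (1/(1+k)) * ((T.prod / k ^ (Multiset.card T) - 1)/(T.prod / k ^ (Multiset.card T) + 1))
      ≤ (Multiset.card T) / (1+k) := by
  intro T
  induction T using Multiset.induction with
  | empty => simp
  | cons a T ih =>
    intro h
    have hka : k ≤ a := h a (Multiset.mem_cons_self a T)
    have hT : ∀ t ∈ T, k ≤ t := fun t ht => h t (Multiset.mem_cons_of_mem ht)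
    have ihT := ih hT
    have hk0 : (0:ℝ) < k := by linarith
    have hprod : k ^ (Multiset.card T) ≤ T.prod := prod_ge k hk T hT
    have hb1 : 1 ≤ T.prod / k ^ (Multiset.card T) := (one_le_div (by positivity)).2 hprod
    have ha1 : 1 ≤ a / k := (one_le_div hk0).2 hka
    simp only [Multiset.map_cons, Multiset.sum_cons, Multiset.prod_cons, Multiset.card_cons]
    have hsplit : a * T.prod / k ^ (Multiset.card T + 1)
        = (a/k) * (T.prod / k ^ (Multiset.card T)) := by
      rw [pow_succ, mul_comm (k ^ Multiset.card T) k, ← div_mul_div_comm]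
    rw [hsplit]
    have hg := g_mul (a/k) (T.prod / k ^ (Multiset.card T)) ha1 hb1
    have hA : (0:ℝ) < 1/(1+k) := by positivity
    have step1 : (1:ℝ)/(1+a) + (1/(1+k)) * ((a/k - 1)/(a/k + 1)) ≤ 1/(1+k) := by
      have h1 : (0:ℝ) < 1 + a := by linarith
      have h2 : (0:ℝ) < a/k + 1 := by linarith
      have h3 : (0:ℝ) < 1 + k := by linarith
      have hak : (0:ℝ) < a + k := by linarith
      have he : (a/k - 1)/(a/k + 1) = (a-k)/(a+k) := by
        rw [div_eq_div_iff (ne_of_gt h2) (ne_of_gt hak)]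
        field_simp
      rw [he, div_mul_div_comm, one_mul,
        div_add_div _ _ (ne_of_gt h1) (by positivity : ((1+k)*(a+k)) ≠ 0),
        div_le_div_iff₀ (by positivity) h3]
      nlinarith [mul_nonneg (sub_nonneg.2 hk) (sub_nonneg.2 hka)]
    have hmul := mul_le_mul_of_nonneg_left hg (le_of_lt hA)
    push_cast
    calc 1/(1+a) + (T.map (fun t => 1/(1+t))).sum +
          1/(1+k) * ((a/k * (T.prod / k ^ Multiset.card T) - 1)/(a/k * (T.prod / k ^ Multiset.card T) + 1))
        ≤ 1/(1+a) + (T.map (fun t => 1/(1+t))).sum +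
          (1/(1+k) * ((a/k - 1)/(a/k + 1)) + 1/(1+k) * ((T.prod / k ^ Multiset.card T - 1)/(T.prod / k ^ Multiset.card T + 1))) := by
          rw [← mul_add]; linarith [hmul]
      _ ≤ 1/(1+k) + Multiset.card T / (1+k) := by linarith [ihT, step1]
      _ = (Multiset.card T + 1) / (1+k) := by ring


lemma re_bound (z w : ℂ) (hz : ‖z‖ = 1) (hw : 1 ≤ ‖w‖) (hzw : z ≠ w) :
    (z / (z - w)).re ≤ 1 / (1 + ‖w‖) := by
  have hd : z - w ≠ 0 := sub_ne_zero.2 hzw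
  have hns : 0 < Complex.normSq (z - w) := Complex.normSq_pos.2 hd
  set R := ‖w‖ with hR
  have hz2 : z.re*z.re + z.im*z.im = 1 := by
    have h := Complex.sq_norm z
    rw [hz] at h
    rw [Complex.normSq_apply] at h
    nlinarith [h]
  have hw2 : w.re*w.re + w.im*w.im = R*R := by
    have h := Complex.sq_norm w
    rw [Complex.normSq_apply] at h
    nlinarith [h]
  have hR1 : 1 ≤ R := hw
  rw [Complex.div_re, Complex.normSq_apply]
  simp only [Complex.sub_re, Complex.sub_im]
  have hnsq : Complex.normSq (z - w) = (z.re - w.re)*(z.re - w.re) + (z.im - w.im)*(z.im - w.im) := by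
    rw [Complex.normSq_apply]; simp [Complex.sub_re, Complex.sub_im]
  rw [hnsq] at hns
  have habs : |(z * (starRingEnd ℂ) w).re| ≤ R := by
    have h1 := Complex.abs_re_le_norm (z * (starRingEnd ℂ) w)
    rwa [norm_mul, hz, Complex.norm_conj, one_mul] at h1
  rw [Complex.mul_re, Complex.conj_re, Complex.conj_im] at habs
  have ht : -R ≤ z.re * w.re + z.im * w.im := by
    have := abs_le.1 habs; nlinarith [this.1]
  rw [← add_div, div_le_div_iff₀ hns (by linarith)]
  nlinarith [mul_nonneg (sub_nonneg.2 hR1) (show (0:ℝ) ≤ R + (z.re*w.re + z.im*w.im) by linarith)]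

lemma logderiv_prod (z : ℂ) : ∀ (T : Multiset ℂ), (∀ r ∈ T, z ≠ r) →
    z * (derivative ((T.map (fun r => X - C r)).prod)).eval z
      = ((T.map (fun r => z / (z - r))).sum) * ((T.map (fun r => X - C r)).prod).eval z := by
  intro T
  induction T using Multiset.induction with
  | empty => simp
  | cons a T ih =>
    intro h
    have ha : z ≠ a := h a (Multiset.mem_cons_self a T)
    have hd : z - a ≠ 0 := sub_ne_zero.2 ha
    have ihT := ih (fun r hr => h r (Multiset.mem_cons_of_mem hr))
    simp only [Multiset.map_cons, Multiset.prod_cons, Multiset.sum_cons, derivative_mul,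
      derivative_sub, derivative_X, derivative_C, sub_zero, one_mul, eval_mul, eval_add,
      eval_sub, eval_X, eval_C]
    rw [mul_add]
    have h1 : z * ((z - a) * eval z (derivative (Multiset.map (fun r => X - C r) T).prod))
        = (z - a) * ((Multiset.map (fun r => z / (z - r)) T).sum
            * eval z (Multiset.map (fun r => X - C r) T).prod) := by
      rw [show z * ((z - a) * eval z (derivative (Multiset.map (fun r => X - C r) T).prod))
          = (z - a) * (z * eval z (derivative (Multiset.map (fun r => X - C r) T).prod)) by ring,
        ihT]
    rw [h1]
    field_simp

lemma eval_prod_ne (z : ℂ) (T : Multiset ℂ) (h : ∀ r ∈ T, z ≠ r) :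
    ((T.map (fun r => X - C r)).prod).eval z ≠ 0 := by
  rw [eval_multiset_prod]
  refine Multiset.prod_ne_zero ?_
  rw [Multiset.map_map]
  simp only [Multiset.mem_map, Function.comp]
  rintro ⟨r, hr, hrr⟩
  simp only [eval_sub, eval_X, eval_C] at hrr
  exact sub_ne_zero.2 (h r hr) hrr

theorem stmt_17 (n : ℕ) (hn : 1 ≤ n) (c : ℕ → ℂ) (hc : c n ≠ 0)
    (P : Polynomial ℂ)
    (hP : P = ∑ v ∈ Finset.range (n + 1), Polynomial.C (c v) * Polynomial.X ^ v)
    (k : ℝ) (hk : 1 ≤ k)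
    (hzero : ∀ z : ℂ, ‖z‖ < k → P.eval z ≠ 0)
    (z : ℂ) (hz : ‖z‖ = 1) (hPz : P.eval z ≠ 0) :
    (z * (derivative P).eval z / P.eval z).re ≤
      (1 / (1 + k)) *
        ((n : ℝ) - (‖c 0‖ - k ^ n * ‖c n‖) /
          (‖c 0‖ + k ^ n * ‖c n‖)) := by
  -- coefficients
  have hcoeffn : P.coeff n = c n := by
    rw [hP, finset_sum_coeff]
    simp only [coeff_C_mul, coeff_X_pow]
    rw [Finset.sum_eq_single n]
    · simp
    · intro b _ hb; simp [Ne.symm hb]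
    · intro hmem; exact absurd (Finset.self_mem_range_succ n) hmem
  have hdegle : P.natDegree ≤ n := by
    rw [hP]
    apply natDegree_sum_le_of_forall_le
    intro v hv
    exact le_trans (natDegree_C_mul_le _ _) (by simpa using Finset.mem_range_succ_iff.1 hv)
  have hdeg : P.natDegree = n :=
    le_antisymm hdegle (le_natDegree_of_ne_zero (hcoeffn ▸ hc))
  have hlead : P.leadingCoeff = c n := by rw [leadingCoeff, hdeg, hcoeffn]
  have hcard : Multiset.card P.roots = P.natDegree :=
    splits_iff_card_roots.1 (IsAlgClosed.splits P)
  have hfac : C (c n) * (P.roots.map (fun a => X - C a)).prod = P := by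
    rw [← hlead]; exact C_leadingCoeff_mul_prod_multiset_X_sub_C hcard
  have hcardn : Multiset.card P.roots = n := hcard.trans hdeg
  have hroots_k : ∀ r ∈ P.roots, k ≤ ‖r‖ := by
    intro r hr
    by_contra hlt
    exact hzero r (lt_of_not_ge hlt) (isRoot_of_mem_roots hr)
  have hzne : ∀ r ∈ P.roots, z ≠ r := by
    intro r hr he
    exact hPz (he ▸ isRoot_of_mem_roots hr)
  -- eval of the product at z nonzero
  have hprodz : ((P.roots.map (fun r => X - C r)).prod).eval z ≠ 0 := by
    intro h0
    apply hPz
    rw [← hfac, eval_mul, h0, mul_zero]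
  -- log derivative identity
  set S : ℂ := ((P.roots.map (fun r => z / (z - r))).sum) with hS
  have hld : z * (derivative P).eval z / P.eval z = S := by
    conv_lhs => rw [← hfac]
    rw [derivative_mul, derivative_C, zero_mul, zero_add, eval_mul, eval_mul, eval_C]
    rw [show z * (c n * eval z (derivative (Multiset.map (fun r => X - C r) P.roots).prod))
        = c n * (z * eval z (derivative (Multiset.map (fun r => X - C r) P.roots).prod)) by ring,
      logderiv_prod z P.roots hzne]
    rw [show c n * (S * eval z (Multiset.map (fun r => X - C r) P.roots).prod)
        = S * (c n * eval z (Multiset.map (fun r => X - C r) P.roots).prod) by ring,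
      mul_div_assoc, div_self (mul_ne_zero hc hprodz), mul_one]
  rw [hld]
  -- real part
  have hre : S.re = (P.roots.map (fun r => (z / (z - r)).re)).sum := by
    rw [hS, ← Complex.coe_reAddGroupHom, AddMonoidHom.map_multiset_sum, Multiset.map_map]
    rfl
  have hre_le : S.re ≤ (P.roots.map (fun r => 1 / (1 + ‖r‖))).sum := by
    rw [hre]
    apply Multiset.sum_map_le_sum_map
    intro r hr
    exact re_bound z r hz (le_trans hk (hroots_k r hr)) (hzne r hr)
  -- switch to real multiset
  set T : Multiset ℝ := P.roots.map (‖·‖) with hT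
  have hTmem : ∀ t ∈ T, k ≤ t := by
    intro t ht
    obtain ⟨r, hr, rfl⟩ := Multiset.mem_map.1 ht
    exact hroots_k r hr
  have hTcard : Multiset.card T = n := by rw [hT, Multiset.card_map, hcardn]
  have hsum_eq : (P.roots.map (fun r => 1 / (1 + ‖r‖))).sum
      = (T.map (fun t => 1/(1+t))).sum := by
    rw [hT, Multiset.map_map]; rfl
  -- |c 0| = |c n| * T.prod
  have heval0 : P.eval 0 = c 0 := by
    rw [hP, eval_finset_sum]
    rw [Finset.sum_eq_single 0]
    · simp
    · intro b _ hb; simp [zero_pow hb]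
    · intro hmem; exact absurd (Finset.mem_range.2 (by omega)) hmem
  have habs0 : ‖c 0‖ = ‖c n‖ * T.prod := by
    rw [← heval0]
    conv_lhs => rw [← hfac]
    rw [eval_mul, eval_C, norm_mul, eval_multiset_prod, Multiset.map_map]
    congr 1
    rw [← normHom_apply, map_multiset_prod, Multiset.map_map, hT]
    congr 1
    ext r
    simp
  -- positivity facts
  have hcn : (0:ℝ) < ‖c n‖ := norm_pos_iff.2 hc
  have hk0 : (0:ℝ) < k := by linarith
  have hkn : (0:ℝ) < k ^ n := by positivity
  have hprodk : k ^ n ≤ T.prod := by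
    have := prod_ge k hk T hTmem; rwa [hTcard] at this
  have hkey := key_sum k hk T hTmem
  rw [hTcard] at hkey
  -- final algebra
  have hfrac : (T.prod / k ^ n - 1)/(T.prod / k ^ n + 1)
      = (‖c 0‖ - k ^ n * ‖c n‖) /
          (‖c 0‖ + k ^ n * ‖c n‖) := by
    have hTp : (0:ℝ) < T.prod := lt_of_lt_of_le hkn hprodk
    have h5 : (0:ℝ) < T.prod / k ^ n + 1 := by
      linarith [div_pos hTp hkn]
    have h6 : (0:ℝ) < ‖c n‖ * T.prod + k ^ n * ‖c n‖ := by
      nlinarith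
    rw [habs0]
    rw [div_eq_div_iff (ne_of_gt h5) (ne_of_gt h6)]
    field_simp
  rw [hfrac] at hkey
  calc S.re ≤ (T.map (fun t => 1/(1+t))).sum := by rw [← hsum_eq]; exact hre_le
    _ ≤ (1 / (1 + k)) * ((n : ℝ) - (‖c 0‖ - k ^ n * ‖c n‖) /
          (‖c 0‖ + k ^ n * ‖c n‖)) := by
        rw [mul_sub]
        have : (1:ℝ)/(1+k) * n = n / (1+k) := by ring
        linarith [hkey, this]
end

section
/- Let F be a polynomial of degree n with F(z) ≠ 0 for |z| = 1, and let G(z) = z^n · conj(F(1/conj(z))). Then for every z with |z| = 1, |G'(z)|² = n²|F(z)|² + |F'(z)|² − 2n·Re(z F'(z)/F(z))·|F(z)|². -/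
open Polynomial

theorem stmt_19 (n : ℕ) (hn : 1 ≤ n) (F G : Polynomial ℂ) (hdeg : F.natDegree = n)
    (hF : ∀ z : ℂ, ‖z‖ = 1 → F.eval z ≠ 0)
    (hG : ∀ z : ℂ, z ≠ 0 →
      G.eval z = z ^ n * (starRingEnd ℂ) (F.eval (1 / (starRingEnd ℂ) z))) :
    ∀ z : ℂ, ‖z‖ = 1 →
      ‖(derivative G).eval z‖ ^ 2 =
        (n : ℝ) ^ 2 * ‖F.eval z‖ ^ 2 + ‖(derivative F).eval z‖ ^ 2 -
          2 * n * (z * (derivative F).eval z / F.eval z).re * ‖F.eval z‖ ^ 2 := by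
  intro z hz
  have hz0 : z ≠ 0 := by
    intro h; rw [h] at hz; simp at hz
  set Fc := F.map (starRingEnd ℂ) with hFc
  have heq : ∀ w : ℂ, w ≠ 0 → G.eval w = w ^ n * Fc.eval w⁻¹ := by
    intro w hw
    rw [hG w hw]
    congr 1
    have : w⁻¹ = (starRingEnd ℂ) (1 / (starRingEnd ℂ) w) := by
      rw [map_div₀, map_one, Complex.conj_conj, one_div]
    rw [this, hFc, Polynomial.eval_map, Polynomial.eval₂_at_apply]
  have hd1 : HasDerivAt (fun w : ℂ => w ^ n * Fc.eval w⁻¹)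
      ((n : ℂ) * z ^ (n - 1) * Fc.eval z⁻¹ +
        z ^ n * ((derivative Fc).eval z⁻¹ * (-(z ^ 2)⁻¹))) z := by
    have h1 : HasDerivAt (fun w : ℂ => w ^ n) ((n:ℂ) * z ^ (n - 1)) z := hasDerivAt_pow n z
    have h2 : HasDerivAt (fun w : ℂ => Fc.eval w⁻¹)
        ((derivative Fc).eval z⁻¹ * (-(z ^ 2)⁻¹)) z :=
      (Fc.hasDerivAt z⁻¹).comp z (hasDerivAt_inv hz0)
    exact h1.mul h2
  have hd2 : HasDerivAt (fun w : ℂ => G.eval w)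
      ((n : ℂ) * z ^ (n - 1) * Fc.eval z⁻¹ +
        z ^ n * ((derivative Fc).eval z⁻¹ * (-(z ^ 2)⁻¹))) z := by
    apply hd1.congr_of_eventuallyEq
    filter_upwards [eventually_ne_nhds hz0] with w hw
    exact heq w hw
  have hGd : (derivative G).eval z =
      (n : ℂ) * z ^ (n - 1) * Fc.eval z⁻¹ +
        z ^ n * ((derivative Fc).eval z⁻¹ * (-(z ^ 2)⁻¹)) :=
    (G.hasDerivAt z).unique hd2
  have hnormz : Complex.normSq z = 1 := by
    rw [Complex.normSq_eq_norm_sq, hz]; norm_num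
  have hzz : z * (starRingEnd ℂ) z = 1 := by
    rw [Complex.mul_conj, hnormz]; norm_num
  have hzinv : z⁻¹ = (starRingEnd ℂ) z := by
    field_simp
    rw [mul_comm] at hzz
    rw [mul_comm]; exact hzz.symm
  set A := F.eval z with hA
  set B := (derivative F).eval z with hB
  have hA0 : A ≠ 0 := hF z hz
  have hFcA : Fc.eval z⁻¹ = (starRingEnd ℂ) A := by
    rw [hzinv, hFc, Polynomial.eval_map, Polynomial.eval₂_at_apply]
  have hFcB : (derivative Fc).eval z⁻¹ = (starRingEnd ℂ) B := by
    rw [hzinv, hFc, Polynomial.derivative_map, Polynomial.eval_map,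
      Polynomial.eval₂_at_apply]
  rw [hFcA, hFcB] at hGd
  have hpow : z ^ n = z * z ^ (n - 1) := by
    have h : n - 1 + 1 = n := Nat.succ_pred_eq_of_pos hn
    calc z ^ n = z ^ (n - 1 + 1) := by rw [h]
      _ = z * z ^ (n - 1) := by rw [pow_succ]; ring
  have hGd2 : (derivative G).eval z =
      z ^ (n - 1) * (starRingEnd ℂ) ((n : ℂ) * A - z * B) := by
    rw [hGd, hpow, map_sub, map_mul, map_mul]
    rw [show (starRingEnd ℂ) ((n:ℂ)) = (n:ℂ) by simp]
    rw [← hzinv]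
    field_simp
    ring
  have habs : ‖(derivative G).eval z‖ = ‖(n : ℂ) * A - z * B‖ := by
    rw [hGd2, norm_mul, norm_pow, hz, one_pow, one_mul, Complex.norm_conj]
  rw [habs, Complex.sq_norm, Complex.sq_norm, Complex.sq_norm, Complex.normSq_sub]
  have h1 : Complex.normSq ((n:ℂ) * A) = (n:ℝ)^2 * Complex.normSq A := by
    rw [Complex.normSq_mul, Complex.normSq_natCast]; ring
  have h2 : Complex.normSq (z * B) = Complex.normSq B := by
    rw [Complex.normSq_mul, hnormz, one_mul]
  have h3 : ((n:ℂ) * A * (starRingEnd ℂ) (z * B)).re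
      = (n : ℝ) * (z * B / A).re * Complex.normSq A := by
    have e : (n:ℂ) * A * (starRingEnd ℂ) (z * B)
        = (((n : ℝ) * Complex.normSq A : ℝ) : ℂ) * (starRingEnd ℂ) (z * B / A) := by
      rw [map_div₀]
      have hc : ((Complex.normSq A : ℝ) : ℂ) = A * (starRingEnd ℂ) A := (Complex.mul_conj A).symm
      push_cast
      rw [hc]
      have hcA : (starRingEnd ℂ) A ≠ 0 := by simpa using hA0
      field_simp
    rw [e, Complex.re_ofReal_mul, Complex.conj_re]
    ring
  rw [h1, h2, h3]
  ring
end
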